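/- arXiv:0811.1331 — 5 statements merged into one kernel-verified Lean document; each statement's English description precedes it below -/
import Mathlib

section
/- Let n ≥ 2 and let a ∈ A¹ = E¹ be nonzero. Then H¹(A, δ_a) is isomorphic as a k-vector space to the kernel of the map ψ_a : I² → E³ given by ψ_a(x) = a·x, where I² = I ∩ E² is the degree-two part of I. In particular, a nonzero element a ∈ A¹ lies in the first resonance variety R¹ if and only if ψ_a fails to be injective. -/
noncomputable section

open ExteriorAlgebra

/-- Index set for the generators `e_{p,q}`, `p ≠ q`, of the exterior algebra `E`. -/
abbrev RIdx (n : ℕ) := {pq : Fin n × Fin n // pq.1 ≠ pq.2}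

/-- The exterior algebra `E` on the vector space with basis `{e_{p,q} : p ≠ q}`. -/
abbrev Egen (k : Type) [Field k] (n : ℕ) := ExteriorAlgebra k (RIdx n →₀ k)

/-- The degree-one generator `e_{p,q}` of `E`. -/
def egen (k : Type) [Field k] {n : ℕ} (p q : Fin n) (h : p ≠ q) : Egen k n :=
  ExteriorAlgebra.ι k (Finsupp.single (⟨(p, q), h⟩ : RIdx n) (1 : k))

/-- The degree-one generator `e_{p,q}` indexed by an element of `RIdx n`. -/
def egen' (k : Type) [Field k] {n : ℕ} (x : RIdx n) : Egen k n :=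
  ExteriorAlgebra.ι k (Finsupp.single x (1 : k))

/-- The generators `η_{i,j} = e_{i,j} e_{j,i}` (for `i < j`) and
`τ^m_{i,j} = (e_{m,i} - e_{j,i})(e_{m,j} - e_{i,j})` (for `i < j`, `m ∉ {i,j}`)
of the ideal `I`. -/
def resGens (k : Type) [Field k] (n : ℕ) : Set (Egen k n) :=
  {x | ∃ (i j : Fin n) (hij : i < j),
      x = egen k i j hij.ne * egen k j i hij.ne'} ∪
  {x | ∃ (i j m : Fin n) (hij : i < j) (hmi : m ≠ i) (hmj : m ≠ j),
      x = (egen k m i hmi - egen k j i hij.ne') * (egen k m j hmj - egen k i j hij.ne)}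

/-- The two-sided ideal `I` of `E` generated by the `η`'s and `τ`'s. -/
def resIdeal (k : Type) [Field k] (n : ℕ) : TwoSidedIdeal (Egen k n) :=
  TwoSidedIdeal.span (resGens k n)

/-- The quotient algebra `A = E/I`, i.e. `H^*(PΣ_n; k)`. -/
abbrev resA (k : Type) [Field k] (n : ℕ) := (resIdeal k n).ringCon.Quotient

/-- The quotient map `π : E → A = E/I` as a `k`-algebra homomorphism. -/
def resπ (k : Type) [Field k] (n : ℕ) : Egen k n →ₐ[k] resA k n :=
  { (resIdeal k n).ringCon.mk' with commutes' := fun _ => rfl }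

/-- The degree-`m` graded piece `A^m` of `A = E/I`: the image of `E^m = ⋀^m` in `A`. -/
def resAmod (k : Type) [Field k] (n : ℕ) (m : ℕ) : Submodule k (resA k n) :=
  Submodule.map (resπ k n).toLinearMap (⋀[k]^m (RIdx n →₀ k))

/-- The first resonance variety `R¹ = {a ∈ A¹ : H¹(A, δ_a) ≠ 0}`:  `H¹(A,δ_a) ≠ 0` iff some
`x ∈ A¹ = ker(δ_a : A¹ → A²)`-element with `a·x = 0` is not in the image of `δ_a : A⁰ → A¹`. -/
def resR1 (k : Type) [Field k] (n : ℕ) : Set (resA k n) :=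
  {a | a ∈ resAmod k n 1 ∧
    ∃ x ∈ resAmod k n 1, a * x = 0 ∧
      x ∉ Submodule.map (LinearMap.mulLeft k a) (resAmod k n 0)}

/-- The subspace `C_{i,j} = span{e_{i,j}, e_{j,i}}` of `A¹`. -/
def resC2 (k : Type) [Field k] (n : ℕ) (i j : Fin n) (hij : i ≠ j) :
    Submodule k (resA k n) :=
  Submodule.span k {resπ k n (egen k i j hij), resπ k n (egen k j i hij.symm)}

/-- The subspace `C_{i,j,m} = span{e_{j,i} − e_{m,i}, e_{i,j} − e_{m,j}, e_{i,m} − e_{j,m}}`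
of `A¹`. -/
def resC3 (k : Type) [Field k] (n : ℕ) (i j m : Fin n)
    (hij : i ≠ j) (him : i ≠ m) (hjm : j ≠ m) : Submodule k (resA k n) :=
  Submodule.span k {resπ k n (egen k j i hij.symm - egen k m i him.symm),
                    resπ k n (egen k i j hij - egen k m j hjm.symm),
                    resπ k n (egen k i m him - egen k j m hjm)}

/-- The two-sided ideal `I`, viewed as a `k`-subspace of `E`. -/
def resIdealSub (k : Type) [Field k] (n : ℕ) : Submodule k (Egen k n) where
  carrier := resIdeal k n
  add_mem' := (resIdeal k n).add_mem
  zero_mem' := (resIdeal k n).zero_mem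
  smul_mem' c x hx := by
    have h := (resIdeal k n).mul_mem_left (algebraMap k (Egen k n) c) x hx
    simpa [Algebra.smul_def] using h

/-- The degree-two part `I² = I ∩ E²` of the ideal `I`, as a `k`-subspace of `E`. -/
def resI2 (k : Type) [Field k] (n : ℕ) : Submodule k (Egen k n) :=
  resIdealSub k n ⊓ ⋀[k]^2 (RIdx n →₀ k)

/-- The map `ψ_a : I² → E` (with image in `E³` when `a ∈ E¹`), `x ↦ a·x`. -/
def resPsi (k : Type) [Field k] (n : ℕ) (a : Egen k n) : resI2 k n →ₗ[k] Egen k n :=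
  (LinearMap.mulLeft k a).comp (resI2 k n).subtype

end

noncomputable section Aux

open ExteriorAlgebra

variable (k : Type) [Field k] (n : ℕ)

lemma pow_mul_mem {p q : ℕ} {x y : Egen k n}
    (hx : x ∈ ⋀[k]^p (RIdx n →₀ k)) (hy : y ∈ ⋀[k]^q (RIdx n →₀ k)) :
    x * y ∈ ⋀[k]^(p+q) (RIdx n →₀ k) := by
  have h : (⋀[k]^(p+q) (RIdx n →₀ k) : Submodule k (Egen k n))
      = ⋀[k]^p (RIdx n →₀ k) * ⋀[k]^q (RIdx n →₀ k) := pow_add _ p q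
  rw [h]; exact Submodule.mul_mem_mul hx hy

lemma mem_one_iff {x : Egen k n} :
    x ∈ ⋀[k]^1 (RIdx n →₀ k) ↔ ∃ v, ExteriorAlgebra.ι k v = x := by
  have h : (⋀[k]^1 (RIdx n →₀ k) : Submodule k (Egen k n))
      = LinearMap.range (ExteriorAlgebra.ι k (M := RIdx n →₀ k)) := pow_one _
  rw [h]; exact LinearMap.mem_range

lemma egen_mem_one (p q : Fin n) (h : p ≠ q) : egen k p q h ∈ ⋀[k]^1 (RIdx n →₀ k) :=
  (mem_one_iff k n).mpr ⟨_, rfl⟩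

/-- The span of all graded pieces of degree `≥ 2`. -/
def resF : Submodule k (Egen k n) := ⨆ m : ℕ, ⋀[k]^(m+2) (RIdx n →₀ k)

lemma pow_le_resF (m : ℕ) (hm : 2 ≤ m) : ⋀[k]^m (RIdx n →₀ k) ≤ resF k n := by
  obtain ⟨p, rfl⟩ : ∃ p, m = p + 2 := ⟨m - 2, by omega⟩
  exact le_iSup (fun p : ℕ => ⋀[k]^(p+2) (RIdx n →₀ k)) p

lemma resF_mul_mem_left (z : Egen k n) {y : Egen k n} (hy : y ∈ resF k n) :
    z * y ∈ resF k n := by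
  classical
  refine Submodule.iSup_induction (motive := fun y => z * y ∈ resF k n) _ hy ?_ (by simp) ?_
  · intro m w hw
    have hz := DirectSum.sum_support_decompose (fun i : ℕ => ⋀[k]^i (RIdx n →₀ k)) z
    rw [← hz, Finset.sum_mul]
    refine Submodule.sum_mem _ fun p _ => ?_
    exact pow_le_resF k n (p + (m+2)) (by omega)
      (pow_mul_mem k n (SetLike.coe_mem _) hw)
  · intro u w hu hw; simpa [mul_add] using add_mem hu hw

lemma resF_mul_mem_right (z : Egen k n) {y : Egen k n} (hy : y ∈ resF k n) :
    y * z ∈ resF k n := by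
  classical
  refine Submodule.iSup_induction (motive := fun y => y * z ∈ resF k n) _ hy ?_ (by simp) ?_
  · intro m w hw
    have hz := DirectSum.sum_support_decompose (fun i : ℕ => ⋀[k]^i (RIdx n →₀ k)) z
    rw [← hz, Finset.mul_sum]
    refine Submodule.sum_mem _ fun p _ => ?_
    exact pow_le_resF k n ((m+2) + p) (by omega)
      (pow_mul_mem k n hw (SetLike.coe_mem _))
  · intro u w hu hw; simpa [add_mul] using add_mem hu hw

/-- `resF` as a two-sided ideal. -/
def resFIdeal : TwoSidedIdeal (Egen k n) :=
  TwoSidedIdeal.mk' (resF k n : Set (Egen k n))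
    (Submodule.zero_mem _)
    (fun hx hy => Submodule.add_mem _ hx hy)
    (fun hx => Submodule.neg_mem _ hx)
    (fun hy => resF_mul_mem_left k n _ hy)
    (fun hx => resF_mul_mem_right k n _ hx)

lemma mem_resFIdeal {x : Egen k n} : x ∈ resFIdeal k n ↔ x ∈ resF k n :=
  TwoSidedIdeal.mem_mk' _ _ _ _ _ _ _

lemma resGens_subset_pow2 : resGens k n ⊆ (⋀[k]^2 (RIdx n →₀ k) : Set (Egen k n)) := by
  rintro x (⟨i, j, hij, rfl⟩ | ⟨i, j, m, hij, hmi, hmj, rfl⟩)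
  · exact pow_mul_mem k n (egen_mem_one k n _ _ _) (egen_mem_one k n _ _ _)
  · exact pow_mul_mem k n
      (Submodule.sub_mem _ (egen_mem_one k n _ _ _) (egen_mem_one k n _ _ _))
      (Submodule.sub_mem _ (egen_mem_one k n _ _ _) (egen_mem_one k n _ _ _))

lemma resIdeal_le_resF {x : Egen k n} (hx : x ∈ resIdeal k n) : x ∈ resF k n := by
  have := TwoSidedIdeal.mem_span_iff.mp hx (resFIdeal k n) ?_
  · exact (mem_resFIdeal k n).mp this
  · intro g hg
    exact (mem_resFIdeal k n).mpr (pow_le_resF k n 2 le_rfl (resGens_subset_pow2 k n hg))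

lemma eq_zero_of_mem_one_of_mem_resF {x : Egen k n}
    (h1 : x ∈ ⋀[k]^1 (RIdx n →₀ k)) (hF : x ∈ resF k n) : x = 0 := by
  have hint : DirectSum.IsInternal (fun i : ℕ => ⋀[k]^i (RIdx n →₀ k)) :=
    DirectSum.Decomposition.isInternal _
  have hdis := hint.submodule_iSupIndep 1
  have hle : resF k n ≤ ⨆ (j : ℕ) (_ : j ≠ 1), ⋀[k]^j (RIdx n →₀ k) := by
    refine iSup_le fun m => ?_
    exact le_iSup₂ (f := fun (j : ℕ) (_ : j ≠ 1) => ⋀[k]^j (RIdx n →₀ k)) (m+2) (by omega)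
  have : x ∈ (⊥ : Submodule k (Egen k n)) := hdis.le_bot ⟨h1, hle hF⟩
  simpa using this

lemma eq_zero_of_mem_one_of_mem_resIdeal {x : Egen k n}
    (h1 : x ∈ ⋀[k]^1 (RIdx n →₀ k)) (hI : x ∈ resIdeal k n) : x = 0 :=
  eq_zero_of_mem_one_of_mem_resF k n h1 (resIdeal_le_resF k n hI)

lemma resπ_eq_zero_iff {x : Egen k n} : resπ k n x = 0 ↔ x ∈ resIdeal k n := by
  have h0 : (0 : resA k n) = ((0 : Egen k n) : (resIdeal k n).ringCon.Quotient) := rfl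
  show ((x : (resIdeal k n).ringCon.Quotient) = 0) ↔ _
  rw [h0, RingCon.eq, TwoSidedIdeal.rel_iff]
  simp

lemma mem_resIdealSub {x : Egen k n} : x ∈ resIdealSub k n ↔ x ∈ resIdeal k n := Iff.rfl

lemma exists_dual {v : RIdx n →₀ k} (hv : v ≠ 0) :
    ∃ f : Module.Dual k (RIdx n →₀ k), f v = 1 := by
  obtain ⟨i, hi⟩ := Finsupp.ne_iff.mp hv
  simp only [Finsupp.coe_zero, Pi.zero_apply] at hi
  refine ⟨(v i)⁻¹ • (Finsupp.lapply i : (RIdx n →₀ k) →ₗ[k] k), ?_⟩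
  simp [Finsupp.lapply_apply, smul_eq_mul, inv_mul_cancel₀ hi]

lemma eq_mul_contract {v : RIdx n →₀ k} {f : Module.Dual k (RIdx n →₀ k)} (hf : f v = 1)
    {x : Egen k n} (hx : ExteriorAlgebra.ι k v * x = 0) :
    x = ExteriorAlgebra.ι k v *
      (CliffordAlgebra.contractLeft (Q := (0 : QuadraticForm k (RIdx n →₀ k))) f x) := by
  have h := CliffordAlgebra.contractLeft_ι_mul (Q := (0 : QuadraticForm k (RIdx n →₀ k)))
    (d := f) v x
  rw [show CliffordAlgebra.ι (0 : QuadraticForm k (RIdx n →₀ k)) v = ExteriorAlgebra.ι k v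
      from rfl] at h
  rw [hx, map_zero, hf, one_smul] at h
  exact sub_eq_zero.mp h.symm

lemma mem_span_of_one_mul_eq_zero {v : RIdx n →₀ k} (hv : v ≠ 0) {x : Egen k n}
    (h1 : x ∈ ⋀[k]^1 (RIdx n →₀ k)) (hx : ExteriorAlgebra.ι k v * x = 0) :
    x ∈ Submodule.span k {ExteriorAlgebra.ι k v} := by
  obtain ⟨f, hf⟩ := exists_dual k n hv
  obtain ⟨w, rfl⟩ := (mem_one_iff k n).mp h1
  have h := eq_mul_contract k n hf hx
  rw [show (CliffordAlgebra.contractLeft (Q := (0 : QuadraticForm k (RIdx n →₀ k))) f)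
      (ExteriorAlgebra.ι k w) = algebraMap k (Egen k n) (f w)
      from CliffordAlgebra.contractLeft_ι (Q := (0 : QuadraticForm k (RIdx n →₀ k))) f w] at h
  rw [← Algebra.commutes, ← Algebra.smul_def] at h
  rw [h]
  exact Submodule.smul_mem _ _ (Submodule.mem_span_singleton_self _)

/-- The grading of the exterior algebra, as a non-reducible definition. -/
def grA (k : Type) [Field k] (n : ℕ) : ℕ → Submodule k (Egen k n) :=
  fun i => ⋀[k]^i (RIdx n →₀ k)

instance : GradedAlgebra (grA k n) :=
  inferInstanceAs (GradedAlgebra fun i : ℕ => ⋀[k]^i (RIdx n →₀ k))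

lemma mem_grA_iff {x : Egen k n} {i : ℕ} : x ∈ grA k n i ↔ x ∈ ⋀[k]^i (RIdx n →₀ k) :=
  Iff.rfl

lemma mul_decompose_one {x y a : Egen k n} (ha1 : a ∈ ⋀[k]^1 (RIdx n →₀ k))
    (hy2 : y ∈ ⋀[k]^2 (RIdx n →₀ k)) (hxy : y = a * x) :
    y = a * (DirectSum.decompose (grA k n) x 1 : Egen k n) := by
  classical
  have h2 := DirectSum.coe_decompose_mul_add_of_left_mem
    (grA k n) (i := 1) (j := 1) (b := x) ((mem_grA_iff k n).mpr ha1)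
  rw [← hxy] at h2
  calc y = (DirectSum.decompose (grA k n) y (1+1) : Egen k n) :=
        (DirectSum.decompose_of_mem_same _
          (show y ∈ grA k n (1+1) from hy2)).symm
  _ = a * (DirectSum.decompose (grA k n) x 1 : Egen k n) := h2

end Aux

set_option maxHeartbeats 2000000


/-- For `n ≥ 2` and nonzero `a ∈ A¹ = E¹`, the cohomology
`H¹(A, δ_a) = ker(δ_a : A¹ → A²)/im(δ_a : A⁰ → A¹)` is `k`-linearly isomorphic to the
kernel of `ψ_a : I² → E³`, `x ↦ a·x`; in particular `a ∈ R¹` iff `ψ_a` is not injective. -/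
theorem H1_iso_ker_psi
    (k : Type) [Field k] [IsAlgClosed k] [CharZero k] (n : ℕ) (hn : 2 ≤ n)
    (a : Egen k n) (ha1 : a ∈ ⋀[k]^1 (RIdx n →₀ k)) (ha : a ≠ 0) :
    Nonempty
      ((↥(resAmod k n 1 ⊓ LinearMap.ker (LinearMap.mulLeft k (resπ k n a))) ⧸
          Submodule.comap
            (resAmod k n 1 ⊓ LinearMap.ker (LinearMap.mulLeft k (resπ k n a))).subtype
            (Submodule.map (LinearMap.mulLeft k (resπ k n a)) (resAmod k n 0)))
        ≃ₗ[k] ↥(LinearMap.ker (resPsi k n a))) ∧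
    (resπ k n a ∈ resR1 k n ↔ ¬ Function.Injective (resPsi k n a)) := by
  classical
  obtain ⟨v, hv⟩ := (mem_one_iff k n).mp ha1
  have hv0 : v ≠ 0 := by
    rintro rfl; apply ha; rw [← hv, map_zero]
  obtain ⟨f, hf⟩ := exists_dual k n hv0
  have haa : a * a = 0 := by rw [← hv]; exact ExteriorAlgebra.ι_sq_zero v
  -- the subspace K' = {x ∈ E¹ : a x ∈ I} of E
  set K' : Submodule k (Egen k n) :=
    (⋀[k]^1 (RIdx n →₀ k)) ⊓ Submodule.comap (LinearMap.mulLeft k a) (resIdealSub k n)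
    with hK'def
  have hK1 : ∀ x : K', (x : Egen k n) ∈ ⋀[k]^1 (RIdx n →₀ k) :=
    fun x => (Submodule.mem_inf.mp x.2).1
  have hKI : ∀ x : K', a * (x : Egen k n) ∈ resIdeal k n := fun x => by
    have := (Submodule.mem_inf.mp x.2).2
    rw [Submodule.mem_comap, LinearMap.mulLeft_apply] at this
    exact this
  have hmemK' : ∀ y : Egen k n, y ∈ ⋀[k]^1 (RIdx n →₀ k) → a * y ∈ resIdeal k n → y ∈ K' :=
    fun y h1 h2 => Submodule.mem_inf.mpr ⟨h1, Submodule.mem_comap.mpr (by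
      rw [LinearMap.mulLeft_apply]; exact h2)⟩
  have hmem2 : ∀ x : K', a * (x : Egen k n) ∈ resI2 k n := fun x =>
    Submodule.mem_inf.mpr ⟨(mem_resIdealSub k n).mpr (hKI x),
      pow_mul_mem k n ha1 (hK1 x)⟩
  have hψ : ∀ y : resI2 k n, resPsi k n a y = a * (y : Egen k n) := fun y => rfl
  -- the map Φ : K' → ker ψ_a
  let Φ : K' →ₗ[k] ↥(LinearMap.ker (resPsi k n a)) :=
    { toFun := fun x => ⟨⟨a * (x : Egen k n), hmem2 x⟩, by
        rw [LinearMap.mem_ker, hψ, ← mul_assoc, haa, zero_mul]⟩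
      map_add' := fun x y => by
        ext; show a * ((x : Egen k n) + y) = a * x + a * y; rw [mul_add]
      map_smul' := fun c x => by
        ext; show a * (c • (x : Egen k n)) = c • (a * x); rw [mul_smul_comm] }
  have hΦ : ∀ x : K', ((Φ x : resI2 k n) : Egen k n) = a * (x : Egen k n) := fun x => rfl
  have hΦsurj : Function.Surjective Φ := by
    rintro ⟨⟨y, hy⟩, hyk⟩
    have hyI : y ∈ resIdeal k n := (Submodule.mem_inf.mp hy).1
    have hy2 : y ∈ ⋀[k]^2 (RIdx n →₀ k) := (Submodule.mem_inf.mp hy).2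
    have hay : ExteriorAlgebra.ι k v * y = 0 := by
      rw [hv]
      rw [LinearMap.mem_ker, hψ] at hyk
      exact hyk
    have h := eq_mul_contract k n hf hay
    rw [hv] at h
    have h2 := mul_decompose_one k n ha1 hy2 h
    set x1 : Egen k n := (DirectSum.decompose (grA k n)
      ((CliffordAlgebra.contractLeft (Q := (0 : QuadraticForm k (RIdx n →₀ k))) f) y) 1 :
        Egen k n) with hx1def
    have hx11 : x1 ∈ ⋀[k]^1 (RIdx n →₀ k) := (mem_grA_iff k n).mp (SetLike.coe_mem _)
    have hax1 : a * x1 = y := h2.symm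
    refine ⟨⟨x1, hmemK' x1 hx11 (by rw [hax1]; exact hyI)⟩, ?_⟩
    apply Subtype.ext; apply Subtype.ext
    show a * x1 = y
    exact hax1
  have hkerΦ : LinearMap.ker Φ = Submodule.comap K'.subtype (Submodule.span k {a}) := by
    ext x
    rw [LinearMap.mem_ker, Submodule.mem_comap, Submodule.subtype_apply]
    constructor
    · intro h
      have h0 : a * (x : Egen k n) = 0 := by
        rw [← hΦ x, h]; rfl
      rw [← hv] at h0 ⊢
      exact mem_span_of_one_mul_eq_zero k n hv0 (hK1 x) h0
    · intro h
      obtain ⟨c, hc⟩ := Submodule.mem_span_singleton.mp h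
      apply Subtype.ext; apply Subtype.ext
      show a * (x : Egen k n) = 0
      rw [← hc, mul_smul_comm, haa, smul_zero]
  -- the A-side
  set L : Submodule k (resA k n) :=
    resAmod k n 1 ⊓ LinearMap.ker (LinearMap.mulLeft k (resπ k n a)) with hLdef
  set M' : Submodule k L :=
    Submodule.comap L.subtype
      (Submodule.map (LinearMap.mulLeft k (resπ k n a)) (resAmod k n 0)) with hM'def
  have hmemL : ∀ x : K', resπ k n (x : Egen k n) ∈ L := fun x => by
    refine Submodule.mem_inf.mpr ⟨⟨x, hK1 x, rfl⟩, ?_⟩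
    rw [LinearMap.mem_ker, LinearMap.mulLeft_apply, ← map_mul]
    exact (resπ_eq_zero_iff k n).mpr (hKI x)
  let Θ : K' →ₗ[k] L :=
    { toFun := fun x => ⟨resπ k n (x : Egen k n), hmemL x⟩
      map_add' := fun x y => by ext; show resπ k n ((x : Egen k n) + y) = _; rw [map_add]; rfl
      map_smul' := fun c x => by
        ext; show resπ k n (c • (x : Egen k n)) = c • resπ k n (x : Egen k n); rw [map_smul] }
  have hΘsurj : Function.Surjective Θ := by
    rintro ⟨α, hα⟩
    obtain ⟨x, hx1, hxα⟩ := (Submodule.mem_inf.mp hα).1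
    rw [AlgHom.toLinearMap_apply] at hxα
    have hk := (Submodule.mem_inf.mp hα).2
    rw [LinearMap.mem_ker, LinearMap.mulLeft_apply] at hk
    have haxI : a * x ∈ resIdeal k n := by
      rw [← resπ_eq_zero_iff k n, map_mul, hxα, hk]
    exact ⟨⟨x, hmemK' x hx1 haxI⟩, Subtype.ext hxα⟩
  let Θ' : K' →ₗ[k] (L ⧸ M') := M'.mkQ.comp Θ
  have hΘ'surj : Function.Surjective Θ' :=
    (Submodule.mkQ_surjective M').comp hΘsurj
  have hkerΘ' : LinearMap.ker Θ' = Submodule.comap K'.subtype (Submodule.span k {a}) := by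
    ext x
    rw [LinearMap.mem_ker, Submodule.mem_comap, Submodule.subtype_apply]
    have hΘ'x : Θ' x = Submodule.Quotient.mk (Θ x) := rfl
    rw [hΘ'x, Submodule.Quotient.mk_eq_zero, hM'def, Submodule.mem_comap,
      Submodule.subtype_apply]
    have hΘx : ((Θ x : L) : resA k n) = resπ k n (x : Egen k n) := rfl
    rw [hΘx]
    constructor
    · rintro ⟨β, ⟨z, hz0, rfl⟩, hβ⟩
      have hz1 : z ∈ (1 : Submodule k (Egen k n)) := by
        have h : (⋀[k]^0 (RIdx n →₀ k) : Submodule k (Egen k n)) = 1 := pow_zero _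
        rw [← h]; exact hz0
      obtain ⟨c, rfl⟩ := Submodule.mem_one.mp hz1
      rw [LinearMap.mulLeft_apply, AlgHom.toLinearMap_apply, ← map_mul] at hβ
      have hza : a * algebraMap k (Egen k n) c = c • a := by
        rw [← Algebra.commutes, ← Algebra.smul_def]
      rw [hza] at hβ
      have hdiff : (x : Egen k n) - c • a ∈ resIdeal k n := by
        rw [← resπ_eq_zero_iff k n, map_sub, hβ, sub_self]
      have hdiff1 : (x : Egen k n) - c • a ∈ ⋀[k]^1 (RIdx n →₀ k) :=
        Submodule.sub_mem _ (hK1 x) (Submodule.smul_mem _ _ ha1)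
      have := eq_zero_of_mem_one_of_mem_resIdeal k n hdiff1 hdiff
      have hx : (x : Egen k n) = c • a := by
        rw [← sub_eq_zero]; exact this
      rw [hx]
      exact Submodule.smul_mem _ _ (Submodule.mem_span_singleton_self _)
    · intro h
      obtain ⟨c, hc⟩ := Submodule.mem_span_singleton.mp h
      refine ⟨resπ k n (algebraMap k (Egen k n) c), ⟨algebraMap k (Egen k n) c, ?_, rfl⟩, ?_⟩
      · have h : (⋀[k]^0 (RIdx n →₀ k) : Submodule k (Egen k n)) = 1 := pow_zero _
        rw [h]; exact Submodule.mem_one.mpr ⟨c, rfl⟩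
      · rw [LinearMap.mulLeft_apply, ← map_mul]
        congr 1
        rw [← Algebra.commutes, ← Algebra.smul_def, hc]
  -- assemble the isomorphism
  let e2 : (K' ⧸ LinearMap.ker Θ') ≃ₗ[k] (L ⧸ M') := Θ'.quotKerEquivOfSurjective hΘ'surj
  let e1 : (K' ⧸ LinearMap.ker Φ) ≃ₗ[k] ↥(LinearMap.ker (resPsi k n a)) :=
    @LinearMap.quotKerEquivOfSurjective k K' (LinearMap.ker (resPsi k n a)) _ _
      (Submodule.addCommGroup _) _ (Submodule.module _) Φ hΦsurj
  let e3 : (K' ⧸ LinearMap.ker Θ') ≃ₗ[k] (K' ⧸ LinearMap.ker Φ) :=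
    Submodule.quotEquivOfEq _ _ (hkerΘ'.trans hkerΦ.symm)
  let iso : (L ⧸ M') ≃ₗ[k] ↥(LinearMap.ker (resPsi k n a)) :=
    e2.symm.trans (e3.trans e1)
  refine ⟨⟨iso⟩, ?_⟩
  constructor
  · rintro ⟨-, x, hx1, hxk, hxm⟩ hinj
    have hxL : x ∈ L := Submodule.mem_inf.mpr ⟨hx1, by
      rw [LinearMap.mem_ker, LinearMap.mulLeft_apply]; exact hxk⟩
    have h1 : (Submodule.Quotient.mk (⟨x, hxL⟩ : L) : L ⧸ M') ≠ 0 := by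
      rw [Ne, Submodule.Quotient.mk_eq_zero]
      intro hmem
      rw [hM'def, Submodule.mem_comap, Submodule.subtype_apply] at hmem
      exact hxm hmem
    set z := iso (Submodule.Quotient.mk (⟨x, hxL⟩ : L)) with hzdef
    have hz0 : z.1 = 0 := hinj (by
      rw [LinearMap.mem_ker.mp z.2, map_zero])
    apply h1
    rw [← iso.map_eq_zero_iff, ← hzdef]
    exact Subtype.ext hz0
  · intro hninj
    have hker : LinearMap.ker (resPsi k n a) ≠ ⊥ := fun h => hninj (LinearMap.ker_eq_bot.mp h)
    obtain ⟨y, hy, hy0⟩ := Submodule.exists_mem_ne_zero_of_ne_bot hker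
    set q : L ⧸ M' := iso.symm ⟨y, hy⟩ with hqdef
    have hq0 : q ≠ 0 := by
      rw [hqdef, Ne, iso.symm.map_eq_zero_iff]
      intro h
      exact hy0 (by rw [← Subtype.coe_mk y hy, h]; rfl)
    obtain ⟨ℓ, hℓ⟩ := Submodule.mkQ_surjective M' q
    have hℓ1 : (ℓ : resA k n) ∈ resAmod k n 1 := (Submodule.mem_inf.mp ℓ.2).1
    have hℓk : resπ k n a * (ℓ : resA k n) = 0 := by
      have := (Submodule.mem_inf.mp ℓ.2).2
      rw [LinearMap.mem_ker, LinearMap.mulLeft_apply] at this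
      exact this
    refine ⟨⟨a, ha1, rfl⟩, (ℓ : resA k n), hℓ1, hℓk, ?_⟩
    intro hmem
    apply hq0
    rw [← hℓ]
    have : ℓ ∈ M' := by
      rw [hM'def, Submodule.mem_comap, Submodule.subtype_apply]
      exact hmem
    rw [Submodule.mkQ_apply, Submodule.Quotient.mk_eq_zero]
    exact this
end

section
/- Let n ≥ 2. The elements η_{i,j} (1 ≤ i < j ≤ n) together with the elements τ^k_{i,j} (1 ≤ i < j ≤ n, 1 ≤ k ≤ n, k ∉ {i,j}) are linearly independent in E² and form a basis of the degree-two part I² = I ∩ E² of the ideal I; in particular dim_k I² = binom(n,2)·(n−1). -/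
/-- The family of generators `η_{i,j}` (indexed by pairs `i < j`). -/
noncomputable def etaFam (k : Type) [Field k] (n : ℕ)
    (p : {p : Fin n × Fin n // p.1 < p.2}) : Egen k n :=
  egen k p.1.1 p.1.2 p.2.ne * egen k p.1.2 p.1.1 p.2.ne'

/-- The family of generators `τ^m_{i,j}` (indexed by triples `(m, i, j)` with `i < j`,
`m ∉ {i, j}`). -/
noncomputable def tauFam (k : Type) [Field k] (n : ℕ)
    (t : {t : Fin n × Fin n × Fin n // t.2.1 < t.2.2 ∧ t.1 ≠ t.2.1 ∧ t.1 ≠ t.2.2}) :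
    Egen k n :=
  (egen k t.1.1 t.1.2.1 t.2.2.1 - egen k t.1.2.2 t.1.2.1 t.2.1.ne') *
    (egen k t.1.1 t.1.2.2 t.2.2.2 - egen k t.1.2.1 t.1.2.2 t.2.1.ne)


/-! ### Auxiliary development -/

noncomputable section Aux
open ExteriorAlgebra

variable (k : Type) [Field k] {n : ℕ}

abbrev PairIdx (n : ℕ) := {p : Fin n × Fin n // p.1 < p.2}
abbrev TripleIdx (n : ℕ) :=
  {t : Fin n × Fin n × Fin n // t.2.1 < t.2.2 ∧ t.1 ≠ t.2.1 ∧ t.1 ≠ t.2.2}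

/-- The alternating bilinear form dual to a wedge monomial `e_x ∧ e_y`. -/
def coordAlt (x y : RIdx n) : (RIdx n →₀ k) [⋀^Fin 2]→ₗ[k] k where
  toFun v := v 0 x * v 1 y - v 0 y * v 1 x
  map_update_add' v i a b := by
    fin_cases i <;>
      simp [Function.update_self, Function.update_of_ne, Fin.isValue] <;> ring
  map_update_smul' v i c a := by
    fin_cases i <;>
      simp [Function.update_self, Function.update_of_ne, Fin.isValue] <;> ring
  map_eq_zero_of_eq' v i j h hij := by
    fin_cases i <;> fin_cases j <;> simp_all <;> ring

/-- The coefficient functional on `E` extracting the coefficient of `e_x ∧ e_y`. -/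
def phi (x y : RIdx n) : Egen k n →ₗ[k] k :=
  liftAlternating (R := k) (M := RIdx n →₀ k) (N := k)
    (fun i => match i with
      | 2 => coordAlt k x y
      | _ => 0)

theorem egen_eq (p q : Fin n) (h : p ≠ q) : egen k p q h = egen' k ⟨(p, q), h⟩ := rfl

theorem phi_mul (x y u w : RIdx n) :
    phi k x y (egen' k u * egen' k w) =
      ((if u = x ∧ w = y then 1 else 0) - (if u = y ∧ w = x then 1 else 0) : k) := by
  rw [egen', egen', phi, liftAlternating_ι_mul, liftAlternating_ι]
  show (coordAlt k x y).curryLeft _ _ = _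
  simp [coordAlt, AlternatingMap.curryLeft, Finsupp.single_apply, Matrix.cons_val_zero,
    Matrix.cons_val_one]
  split_ifs <;> simp_all

set_option maxHeartbeats 4000000 in
theorem phiT_tau (t t' : TripleIdx n) :
    phi k ⟨(t.1.1, t.1.2.1), t.2.2.1⟩ ⟨(t.1.1, t.1.2.2), t.2.2.2⟩ (tauFam k n t') =
      if t' = t then 1 else 0 := by
  obtain ⟨⟨m, i, j⟩, hij, hmi, hmj⟩ := t
  obtain ⟨⟨m', i', j'⟩, hij', hmi', hmj'⟩ := t'
  have h1 : i.val < j.val := hij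
  have h1' : i'.val < j'.val := hij'
  have h2 : m.val ≠ i.val := fun h => hmi (Fin.ext h)
  have h3 : m.val ≠ j.val := fun h => hmj (Fin.ext h)
  have h2' : m'.val ≠ i'.val := fun h => hmi' (Fin.ext h)
  have h3' : m'.val ≠ j'.val := fun h => hmj' (Fin.ext h)
  simp only [tauFam, egen_eq, sub_mul, mul_sub, map_sub, phi_mul]
  simp only [Subtype.mk.injEq, Prod.mk.injEq, Fin.ext_iff]
  split_ifs <;> first | (exfalso; omega) | norm_num

set_option maxHeartbeats 1000000 in
theorem phiT_eta (t : TripleIdx n) (p : PairIdx n) :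
    phi k ⟨(t.1.1, t.1.2.1), t.2.2.1⟩ ⟨(t.1.1, t.1.2.2), t.2.2.2⟩ (etaFam k n p) = 0 := by
  obtain ⟨⟨m, i, j⟩, hij, hmi, hmj⟩ := t
  obtain ⟨⟨a, b⟩, hab⟩ := p
  have h1 : i.val < j.val := hij
  have h1' : a.val < b.val := hab
  have h2 : m.val ≠ i.val := fun h => hmi (Fin.ext h)
  have h3 : m.val ≠ j.val := fun h => hmj (Fin.ext h)
  simp only [etaFam, egen_eq, phi_mul]
  simp only [Subtype.mk.injEq, Prod.mk.injEq, Fin.ext_iff]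
  split_ifs <;> first | (exfalso; omega) | norm_num

set_option maxHeartbeats 1000000 in
theorem phiP_eta (p p' : PairIdx n) :
    phi k ⟨(p.1.1, p.1.2), p.2.ne⟩ ⟨(p.1.2, p.1.1), p.2.ne'⟩ (etaFam k n p') =
      if p' = p then 1 else 0 := by
  obtain ⟨⟨i, j⟩, hij⟩ := p
  obtain ⟨⟨a, b⟩, hab⟩ := p'
  have h1 : i.val < j.val := hij
  have h1' : a.val < b.val := hab
  simp only [etaFam, egen_eq, phi_mul]
  simp only [Subtype.mk.injEq, Prod.mk.injEq, Fin.ext_iff]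
  split_ifs <;> first | (exfalso; omega) | norm_num

set_option maxHeartbeats 4000000 in
theorem phiP_tau (p : PairIdx n) (t' : TripleIdx n) :
    phi k ⟨(p.1.1, p.1.2), p.2.ne⟩ ⟨(p.1.2, p.1.1), p.2.ne'⟩ (tauFam k n t') =
      if t'.1.2 = p.1 then -1 else 0 := by
  obtain ⟨⟨i, j⟩, hij⟩ := p
  obtain ⟨⟨m', i', j'⟩, hij', hmi', hmj'⟩ := t'
  have h1 : i.val < j.val := hij
  have h1' : i'.val < j'.val := hij'
  have h2' : m'.val ≠ i'.val := fun h => hmi' (Fin.ext h)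
  have h3' : m'.val ≠ j'.val := fun h => hmj' (Fin.ext h)
  simp only [tauFam, egen_eq, sub_mul, mul_sub, map_sub, phi_mul]
  simp only [Subtype.mk.injEq, Prod.mk.injEq, Fin.ext_iff]
  split_ifs <;> first | (exfalso; omega) | norm_num

theorem eta_tau_indep (n : ℕ) :
    LinearIndependent k (Sum.elim (etaFam k n) (tauFam k n)) := by
  rw [Fintype.linearIndependent_iff]
  intro g hg
  have key : ∀ (x y : RIdx n),
      (∑ p : PairIdx n, g (Sum.inl p) * phi k x y (etaFam k n p)) +
        ∑ t : TripleIdx n, g (Sum.inr t) * phi k x y (tauFam k n t) = 0 := by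
    intro x y
    have := congrArg (phi k x y) hg
    rw [map_sum, map_zero] at this
    simp only [map_smul, smul_eq_mul] at this
    rwa [Fintype.sum_sum_type] at this
  have hT : ∀ t : TripleIdx n, g (Sum.inr t) = 0 := by
    intro t
    have h := key ⟨(t.1.1, t.1.2.1), t.2.2.1⟩ ⟨(t.1.1, t.1.2.2), t.2.2.2⟩
    simp only [phiT_eta, phiT_tau, mul_zero, mul_ite, mul_one, Finset.sum_const_zero,
      zero_add, Finset.sum_ite_eq', Finset.mem_univ, if_true] at h
    exact h
  have hP : ∀ p : PairIdx n, g (Sum.inl p) = 0 := by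
    intro p
    have h := key ⟨(p.1.1, p.1.2), p.2.ne⟩ ⟨(p.1.2, p.1.1), p.2.ne'⟩
    simp only [phiP_eta, phiP_tau, hT, zero_mul, mul_ite, mul_one, mul_zero, ite_self,
      Finset.sum_const_zero, add_zero, Finset.sum_ite_eq', Finset.mem_univ, if_true] at h
    exact h
  rintro (p | t)
  · exact hP p
  · exact hT t

theorem etaFam_mem_gens (p : PairIdx n) : etaFam k n p ∈ resGens k n :=
  Or.inl ⟨p.1.1, p.1.2, p.2, rfl⟩

theorem tauFam_mem_gens (t : TripleIdx n) : tauFam k n t ∈ resGens k n :=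
  Or.inr ⟨t.1.2.1, t.1.2.2, t.1.1, t.2.1, t.2.2.1, t.2.2.2, rfl⟩

theorem gens_eq_range :
    resGens k n = Set.range (Sum.elim (etaFam k n) (tauFam k n)) := by
  ext x
  constructor
  · rintro (⟨i, j, hij, rfl⟩ | ⟨i, j, m, hij, hmi, hmj, rfl⟩)
    · exact ⟨Sum.inl ⟨(i, j), hij⟩, rfl⟩
    · exact ⟨Sum.inr ⟨(m, i, j), hij, hmi, hmj⟩, rfl⟩
  · rintro ⟨(p | t), rfl⟩
    · exact etaFam_mem_gens k p
    · exact tauFam_mem_gens k t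

/-- Every `η`/`τ` generator lies in `⋀²`. -/
theorem range_le_wedge2 :
    Submodule.span k (Set.range (Sum.elim (etaFam k n) (tauFam k n))) ≤
      ⋀[k]^2 (RIdx n →₀ k) := by
  rw [Submodule.span_le]
  rintro x ⟨(p | t), rfl⟩
  · show etaFam k n p ∈ LinearMap.range (ι k (M := RIdx n →₀ k)) ^ 2
    rw [sq]
    exact Submodule.mul_mem_mul (LinearMap.mem_range_self _ _) (LinearMap.mem_range_self _ _)
  · show tauFam k n t ∈ LinearMap.range (ι k (M := RIdx n →₀ k)) ^ 2
    rw [sq]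
    refine Submodule.mul_mem_mul ?_ ?_
    · rw [show (egen k t.1.1 t.1.2.1 t.2.2.1 - egen k t.1.2.2 t.1.2.1 t.2.1.ne') =
        ι k (Finsupp.single ⟨(t.1.1, t.1.2.1), t.2.2.1⟩ 1 -
          Finsupp.single ⟨(t.1.2.2, t.1.2.1), t.2.1.ne'⟩ 1) by rw [map_sub]; rfl]
      exact LinearMap.mem_range_self _ _
    · rw [show (egen k t.1.1 t.1.2.2 t.2.2.2 - egen k t.1.2.1 t.1.2.2 t.2.1.ne) =
        ι k (Finsupp.single ⟨(t.1.1, t.1.2.2), t.2.2.2⟩ 1 -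
          Finsupp.single ⟨(t.1.2.1, t.1.2.2), t.2.1.ne⟩ 1) by rw [map_sub]; rfl]
      exact LinearMap.mem_range_self _ _

/-- The span of the generators plus everything in degrees `≥ 3`. -/
def bigJ (n : ℕ) : Submodule k (Egen k n) :=
  Submodule.span k (Set.range (Sum.elim (etaFam k n) (tauFam k n))) ⊔
    ⨆ m : ℕ, ⋀[k]^(m + 3) (RIdx n →₀ k)

theorem wedge_mul_wedge (a b : ℕ) {x y : Egen k n}
    (hx : x ∈ ⋀[k]^a (RIdx n →₀ k)) (hy : y ∈ ⋀[k]^b (RIdx n →₀ k)) :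
    x * y ∈ ⋀[k]^(a + b) (RIdx n →₀ k) := by
  rw [exteriorPower, pow_add]
  exact Submodule.mul_mem_mul hx hy

theorem wedge3_le_bigJ (m : ℕ) : ⋀[k]^(m + 3) (RIdx n →₀ k) ≤ bigJ k n :=
  (le_iSup (fun m => ⋀[k]^(m + 3) (RIdx n →₀ k)) m).trans le_sup_right

theorem span_le_bigJ :
    Submodule.span k (Set.range (Sum.elim (etaFam k n) (tauFam k n))) ≤ bigJ k n :=
  le_sup_left

theorem bigJ_mul_mem (a : Egen k n) :
    ∀ x ∈ bigJ k n, a * x ∈ bigJ k n ∧ x * a ∈ bigJ k n := by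
  induction a using DirectSum.Decomposition.inductionOn
      (ℳ := fun i => ⋀[k]^i (RIdx n →₀ k)) with
  | zero => intro x hx; simpa using ⟨(bigJ k n).zero_mem, (bigJ k n).zero_mem⟩
  | add a b ha hb =>
      intro x hx
      rw [add_mul, mul_add]
      exact ⟨(bigJ k n).add_mem (ha x hx).1 (hb x hx).1,
        (bigJ k n).add_mem (ha x hx).2 (hb x hx).2⟩
  | @homogeneous d a =>
      intro x hx
      have hS : ∀ z ∈ Submodule.span k (Set.range (Sum.elim (etaFam k n) (tauFam k n))),
          (a : Egen k n) * z ∈ bigJ k n ∧ z * (a : Egen k n) ∈ bigJ k n := by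
        intro z hz
        have hz2 : z ∈ ⋀[k]^2 (RIdx n →₀ k) := range_le_wedge2 k hz
        rcases d with _ | d
        · have h0 : (a : Egen k n) ∈ (1 : Submodule k (Egen k n)) := by
            simpa [pow_zero] using a.2
          obtain ⟨c, hc⟩ := Submodule.mem_one.mp h0
          constructor
          · rw [← hc, ← Algebra.smul_def]
            exact (bigJ k n).smul_mem c (span_le_bigJ k hz)
          · rw [← hc, ← Algebra.commutes, ← Algebra.smul_def]
            exact (bigJ k n).smul_mem c (span_le_bigJ k hz)
        · constructor
          · have := wedge_mul_wedge k (d + 1) 2 a.2 hz2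
            rw [show d + 1 + 2 = d + 3 by omega] at this
            exact wedge3_le_bigJ k d this
          · have := wedge_mul_wedge k 2 (d + 1) hz2 a.2
            rw [show 2 + (d + 1) = d + 3 by omega] at this
            exact wedge3_le_bigJ k d this
      have hH : ∀ z ∈ (⨆ m : ℕ, ⋀[k]^(m + 3) (RIdx n →₀ k)),
          (a : Egen k n) * z ∈ bigJ k n ∧ z * (a : Egen k n) ∈ bigJ k n := by
        intro z hz
        refine Submodule.iSup_induction (motive := fun z =>
            (a : Egen k n) * z ∈ bigJ k n ∧ z * (a : Egen k n) ∈ bigJ k n)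
          (fun m => ⋀[k]^(m + 3) (RIdx n →₀ k)) hz ?_ ⟨by simp, by simp⟩ ?_
        · intro m z hzm
          constructor
          · have := wedge_mul_wedge k d (m + 3) a.2 hzm
            rw [show d + (m + 3) = (d + m) + 3 by omega] at this
            exact wedge3_le_bigJ k (d + m) this
          · have := wedge_mul_wedge k (m + 3) d hzm a.2
            rw [show m + 3 + d = (m + d) + 3 by omega] at this
            exact wedge3_le_bigJ k (m + d) this
        · intro y z hy hz
          rw [mul_add, add_mul]
          exact ⟨(bigJ k n).add_mem hy.1 hz.1, (bigJ k n).add_mem hy.2 hz.2⟩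
      obtain ⟨s, hs, h, hh, rfl⟩ := Submodule.mem_sup.mp hx
      rw [mul_add, add_mul]
      exact ⟨(bigJ k n).add_mem (hS s hs).1 (hH h hh).1,
        (bigJ k n).add_mem (hS s hs).2 (hH h hh).2⟩

/-- `bigJ` as a two-sided ideal. -/
def bigJtsi (n : ℕ) : TwoSidedIdeal (Egen k n) :=
  TwoSidedIdeal.mk' (bigJ k n : Set (Egen k n)) (bigJ k n).zero_mem
    (fun hx hy => (bigJ k n).add_mem hx hy) (fun hx => (bigJ k n).neg_mem hx)
    (fun {x y} hy => (bigJ_mul_mem k x y hy).1)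
    (fun {x y} hx => (bigJ_mul_mem k y x hx).2)

theorem resIdeal_le_bigJ {x : Egen k n} (hx : x ∈ resIdeal k n) : x ∈ bigJ k n := by
  have h := TwoSidedIdeal.mem_span_iff.mp hx (bigJtsi k n) ?_
  · rwa [bigJtsi, TwoSidedIdeal.mem_mk'] at h
  · intro g hg
    rw [SetLike.mem_coe, bigJtsi, TwoSidedIdeal.mem_mk']
    rw [gens_eq_range] at hg
    exact span_le_bigJ k (Submodule.subset_span hg)

theorem wedge2_disjoint :
    Disjoint (⋀[k]^2 (RIdx n →₀ k)) (⨆ m : ℕ, ⋀[k]^(m + 3) (RIdx n →₀ k)) := by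
  have hint : DirectSum.IsInternal (fun i : ℕ => ⋀[k]^i (RIdx n →₀ k)) :=
    DirectSum.Decomposition.isInternal _
  have hind := hint.submodule_iSupIndep
  exact (hind 2).mono_right (iSup_le fun m =>
    le_iSup₂ (f := fun j (_ : j ≠ 2) => ⋀[k]^j (RIdx n →₀ k)) (m + 3) (by omega))

theorem span_eq_resI2 :
    Submodule.span k (Set.range (Sum.elim (etaFam k n) (tauFam k n))) = resI2 k n := by
  apply le_antisymm
  · rw [Submodule.span_le]
    rintro x ⟨i, rfl⟩
    refine ⟨?_, range_le_wedge2 k (Submodule.subset_span ⟨i, rfl⟩)⟩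
    show Sum.elim (etaFam k n) (tauFam k n) i ∈ resIdeal k n
    apply TwoSidedIdeal.subset_span
    rcases i with p | t
    · exact etaFam_mem_gens k p
    · exact tauFam_mem_gens k t
  · rintro x ⟨hxI, hx2⟩
    have hxJ : x ∈ bigJ k n := resIdeal_le_bigJ k hxI
    obtain ⟨s, hs, h, hh, hsum⟩ := Submodule.mem_sup.mp hxJ
    have hs2 : s ∈ ⋀[k]^2 (RIdx n →₀ k) := range_le_wedge2 k hs
    have hh2 : h ∈ ⋀[k]^2 (RIdx n →₀ k) := by
      have : h = x - s := by rw [← hsum]; abel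
      rw [this]
      exact Submodule.sub_mem _ hx2 hs2
    have : h = 0 := Submodule.disjoint_def.mp (wedge2_disjoint k) h hh2 hh
    rw [← hsum, this, add_zero]
    exact hs

/-! ### Cardinality computations -/

def pairEquiv (n : ℕ) : PairIdx n ≃ Σ j : Fin n, Fin j.val where
  toFun p := ⟨p.1.2, ⟨p.1.1.val, p.2⟩⟩
  invFun x := ⟨(⟨x.2.val, lt_trans x.2.isLt x.1.isLt⟩, x.1), x.2.isLt⟩
  left_inv p := by ext <;> rfl
  right_inv x := by ext <;> rfl

theorem card_pairIdx (n : ℕ) : Fintype.card (PairIdx n) = n.choose 2 := by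
  rw [Fintype.card_congr (pairEquiv n), Fintype.card_sigma]
  simp only [Fintype.card_fin]
  rw [Fin.sum_univ_eq_sum_range (fun i => i) n]
  have h2 : (∑ i ∈ Finset.range n, i) * 2 = n * (n - 1) := Finset.sum_range_id_mul_two n
  rw [Nat.choose_two_right]
  omega

def tripleEquiv (n : ℕ) :
    TripleIdx n ≃ Σ p : PairIdx n, {m : Fin n // m ≠ p.1.1 ∧ m ≠ p.1.2} where
  toFun t := ⟨⟨t.1.2, t.2.1⟩, ⟨t.1.1, t.2.2.1, t.2.2.2⟩⟩
  invFun x := ⟨(x.2.1, x.1.1.1, x.1.1.2), x.1.2, x.2.2.1, x.2.2.2⟩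
  left_inv t := by ext <;> rfl
  right_inv x := by ext <;> rfl

theorem card_ne_two {n : ℕ} (i j : Fin n) (hij : i ≠ j) :
    Fintype.card {m : Fin n // m ≠ i ∧ m ≠ j} = n - 2 := by
  rw [Fintype.card_subtype]
  have : Finset.filter (fun m : Fin n => m ≠ i ∧ m ≠ j) Finset.univ =
      Finset.univ \ {i, j} := by
    ext m; simp [and_comm]
  rw [this, Finset.card_sdiff_of_subset (Finset.subset_univ _), Finset.card_pair hij,
    Finset.card_univ, Fintype.card_fin]

theorem card_tripleIdx (n : ℕ) : Fintype.card (TripleIdx n) = n.choose 2 * (n - 2) := by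
  rw [Fintype.card_congr (tripleEquiv n), Fintype.card_sigma]
  have : ∀ p : PairIdx n, Fintype.card {m : Fin n // m ≠ p.1.1 ∧ m ≠ p.1.2} = n - 2 :=
    fun p => card_ne_two p.1.1 p.1.2 p.2.ne
  rw [Finset.sum_congr rfl (fun p _ => this p), Finset.sum_const, Finset.card_univ,
    card_pairIdx, smul_eq_mul]

end Aux


/-- For `n ≥ 2`, the `η_{i,j}` (for `i < j`) together with the `τ^m_{i,j}` (for `i < j`,
`m ∉ {i,j}`) are linearly independent in `E²` and form a basis of `I² = I ∩ E²`;
in particular `dim_k I² = C(n,2)·(n−1)`. -/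
theorem eta_tau_basis_of_I2
    (k : Type) [Field k] [CharZero k] (n : ℕ) (hn : 2 ≤ n) :
    LinearIndependent k (Sum.elim (etaFam k n) (tauFam k n)) ∧
    Submodule.span k (Set.range (Sum.elim (etaFam k n) (tauFam k n))) = resI2 k n ∧
    Module.finrank k (resI2 k n) = n.choose 2 * (n - 1) := by
  refine ⟨eta_tau_indep k n, span_eq_resI2 k, ?_⟩
  rw [← span_eq_resI2 k, finrank_span_eq_card (eta_tau_indep k n), Fintype.card_sum,
    card_pairIdx, card_tripleIdx]
  have : n - 1 = (n - 2) + 1 := by omega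
  rw [this, Nat.mul_add, mul_one, add_comm]
end

section
/- Let n ≥ 3 and 1 ≤ i < j < k ≤ n, and let a = Σ_{p≠q} a_{p,q} e_{p,q} ∈ E¹ be an element of C_{i,j,k}, i.e., a_{j,i} + a_{k,i} = 0, a_{i,j} + a_{k,j} = 0, a_{i,k} + a_{j,k} = 0, and a_{p,q} = 0 whenever {p,q} ⊄ {i,j,k}. Then in the exterior algebra E one has the identities a · (a_{j,i} τ^k_{i,j} − a_{i,k} τ^i_{j,k}) = 0 and a · (a_{i,j} τ^k_{i,j} − a_{i,k} τ^j_{i,k}) = 0. -/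
set_option maxHeartbeats 1000000 in
/-- For `n ≥ 3`, `i < j < m`, and `a = Σ a_{p,q} e_{p,q} ∈ C_{i,j,m}` (that is,
`a_{j,i} + a_{m,i} = 0`, `a_{i,j} + a_{m,j} = 0`, `a_{i,m} + a_{j,m} = 0`, and `a_{p,q} = 0`
whenever `{p,q} ⊄ {i,j,m}`), one has `a·(a_{j,i} τ^m_{i,j} − a_{i,m} τ^i_{j,m}) = 0` and
`a·(a_{i,j} τ^m_{i,j} − a_{i,m} τ^j_{i,m}) = 0` in the exterior algebra `E`. -/
theorem C3_kernel_elements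
    (k : Type) [Field k] [CharZero k] (n : ℕ) (hn : 3 ≤ n)
    (i j m : Fin n) (hij : i < j) (hjm : j < m)
    (v : RIdx n →₀ k)
    (h1 : v ⟨(j, i), hij.ne'⟩ + v ⟨(m, i), (hij.trans hjm).ne'⟩ = 0)
    (h2 : v ⟨(i, j), hij.ne⟩ + v ⟨(m, j), hjm.ne'⟩ = 0)
    (h3 : v ⟨(i, m), (hij.trans hjm).ne⟩ + v ⟨(j, m), hjm.ne⟩ = 0)
    (h4 : ∀ x : RIdx n, ¬ (({x.1.1, x.1.2} : Finset (Fin n)) ⊆ {i, j, m}) → v x = 0) :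
    ExteriorAlgebra.ι k v *
        (v ⟨(j, i), hij.ne'⟩ •
            ((egen k m i (hij.trans hjm).ne' - egen k j i hij.ne') *
              (egen k m j hjm.ne' - egen k i j hij.ne)) -
          v ⟨(i, m), (hij.trans hjm).ne⟩ •
            ((egen k i j hij.ne - egen k m j hjm.ne') *
              (egen k i m (hij.trans hjm).ne - egen k j m hjm.ne))) = 0 ∧
    ExteriorAlgebra.ι k v *
        (v ⟨(i, j), hij.ne⟩ •
            ((egen k m i (hij.trans hjm).ne' - egen k j i hij.ne') *
              (egen k m j hjm.ne' - egen k i j hij.ne)) -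
          v ⟨(i, m), (hij.trans hjm).ne⟩ •
            ((egen k j i hij.ne' - egen k m i (hij.trans hjm).ne') *
              (egen k j m hjm.ne - egen k i m (hij.trans hjm).ne))) = 0 := by
  classical
  set x1 : RIdx n := ⟨(j, i), hij.ne'⟩ with hx1
  set x2 : RIdx n := ⟨(i, j), hij.ne⟩ with hx2
  set x3 : RIdx n := ⟨(i, m), (hij.trans hjm).ne⟩ with hx3
  set x4 : RIdx n := ⟨(m, i), (hij.trans hjm).ne'⟩ with hx4
  set x5 : RIdx n := ⟨(m, j), hjm.ne'⟩ with hx5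
  set x6 : RIdx n := ⟨(j, m), hjm.ne⟩ with hx6
  set A := v x1 with hA
  set B := v x2 with hB
  set C := v x3 with hC
  have hv4 : v x4 = -A := by linear_combination h1
  have hv5 : v x5 = -B := by linear_combination h2
  have hv6 : v x6 = -C := by linear_combination h3
  set w1 : RIdx n →₀ k := Finsupp.single x1 1 - Finsupp.single x4 1 with hw1
  set w2 : RIdx n →₀ k := Finsupp.single x2 1 - Finsupp.single x5 1 with hw2
  set w3 : RIdx n →₀ k := Finsupp.single x3 1 - Finsupp.single x6 1 with hw3
  -- all six indices are distinct
  have hne12 : x1 ≠ x2 := by simp [hx1, hx2, Subtype.ext_iff, Prod.ext_iff, hij.ne']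
  have hvdecomp : v = A • w1 + B • w2 + C • w3 := by
    ext x
    by_cases e1 : x = x1
    · subst e1
      simp [hw1, hw2, hw3, Finsupp.single_apply, hx1, hx2, hx3, hx4, hx5, hx6,
        Subtype.ext_iff, Prod.ext_iff, hij.ne, hij.ne', hjm.ne, hjm.ne',
        (hij.trans hjm).ne, (hij.trans hjm).ne']
      rfl
    by_cases e2 : x = x2
    · subst e2
      simp [hw1, hw2, hw3, Finsupp.single_apply, hx1, hx2, hx3, hx4, hx5, hx6,
        Subtype.ext_iff, Prod.ext_iff, hij.ne, hij.ne', hjm.ne, hjm.ne',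
        (hij.trans hjm).ne, (hij.trans hjm).ne']
      rfl
    by_cases e3 : x = x3
    · subst e3
      simp [hw1, hw2, hw3, Finsupp.single_apply, hx1, hx2, hx3, hx4, hx5, hx6,
        Subtype.ext_iff, Prod.ext_iff, hij.ne, hij.ne', hjm.ne, hjm.ne',
        (hij.trans hjm).ne, (hij.trans hjm).ne']
      rfl
    by_cases e4 : x = x4
    · subst e4
      simp only [Finsupp.coe_add, Pi.add_apply, Finsupp.coe_smul, Pi.smul_apply, hv4]
      simp [hw1, hw2, hw3, Finsupp.single_apply, hx1, hx2, hx3, hx4, hx5, hx6,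
        Subtype.ext_iff, Prod.ext_iff, hij.ne, hij.ne', hjm.ne, hjm.ne',
        (hij.trans hjm).ne, (hij.trans hjm).ne']
    by_cases e5 : x = x5
    · subst e5
      simp only [Finsupp.coe_add, Pi.add_apply, Finsupp.coe_smul, Pi.smul_apply, hv5]
      simp [hw1, hw2, hw3, Finsupp.single_apply, hx1, hx2, hx3, hx4, hx5, hx6,
        Subtype.ext_iff, Prod.ext_iff, hij.ne, hij.ne', hjm.ne, hjm.ne',
        (hij.trans hjm).ne, (hij.trans hjm).ne']
    by_cases e6 : x = x6
    · subst e6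
      simp only [Finsupp.coe_add, Pi.add_apply, Finsupp.coe_smul, Pi.smul_apply, hv6]
      simp [hw1, hw2, hw3, Finsupp.single_apply, hx1, hx2, hx3, hx4, hx5, hx6,
        Subtype.ext_iff, Prod.ext_iff, hij.ne, hij.ne', hjm.ne, hjm.ne',
        (hij.trans hjm).ne, (hij.trans hjm).ne']
    · have hvx : v x = 0 := by
        apply h4
        intro hsub
        have hm1 : x.1.1 ∈ ({i, j, m} : Finset (Fin n)) := hsub (by simp)
        have hm2 : x.1.2 ∈ ({i, j, m} : Finset (Fin n)) := hsub (by simp)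
        simp only [Finset.mem_insert, Finset.mem_singleton] at hm1 hm2
        have hne := x.2
        rcases hm1 with ha | ha | ha <;> rcases hm2 with hb | hb | hb <;>
          first
          | exact hne (ha.trans hb.symm)
          | exact e1 (Subtype.ext (Prod.ext ha hb))
          | exact e2 (Subtype.ext (Prod.ext ha hb))
          | exact e3 (Subtype.ext (Prod.ext ha hb))
          | exact e4 (Subtype.ext (Prod.ext ha hb))
          | exact e5 (Subtype.ext (Prod.ext ha hb))
          | exact e6 (Subtype.ext (Prod.ext ha hb))
      rw [hvx]
      have e1' : x1 ≠ x := fun h => e1 h.symm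
      have e2' : x2 ≠ x := fun h => e2 h.symm
      have e3' : x3 ≠ x := fun h => e3 h.symm
      have e4' : x4 ≠ x := fun h => e4 h.symm
      have e5' : x5 ≠ x := fun h => e5 h.symm
      have e6' : x6 ≠ x := fun h => e6 h.symm
      have g1 : w1 x = 0 := by simp [hw1, Finsupp.single_apply, e1', e4']
      have g2 : w2 x = 0 := by simp [hw2, Finsupp.single_apply, e2', e5']
      have g3 : w3 x = 0 := by simp [hw3, Finsupp.single_apply, e3', e6']
      simp [g1, g2, g3]
  set U1 := ExteriorAlgebra.ι k w1 with hU1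
  set U2 := ExteriorAlgebra.ι k w2 with hU2
  set U3 := ExteriorAlgebra.ι k w3 with hU3
  have hιv : ExteriorAlgebra.ι k v = A • U1 + B • U2 + C • U3 := by
    rw [hvdecomp]; simp [hU1, hU2, hU3]
  -- express the egen differences in terms of U's
  have hE1 : egen k m i (hij.trans hjm).ne' - egen k j i hij.ne' = -U1 := by
    rw [hU1, hw1, map_sub]
    simp [egen, hx1, hx4]
    try abel
  have hE2 : egen k m j hjm.ne' - egen k i j hij.ne = -U2 := by
    rw [hU2, hw2, map_sub]
    simp [egen, hx2, hx5]
    try abel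
  have hE2' : egen k i j hij.ne - egen k m j hjm.ne' = U2 := by
    rw [hU2, hw2, map_sub]; simp [egen, hx2, hx5]
  have hE3 : egen k i m (hij.trans hjm).ne - egen k j m hjm.ne = U3 := by
    rw [hU3, hw3, map_sub]; simp [egen, hx3, hx6]
  have hE1' : egen k j i hij.ne' - egen k m i (hij.trans hjm).ne' = U1 := by
    rw [hU1, hw1, map_sub]; simp [egen, hx1, hx4]
  have hE3' : egen k j m hjm.ne - egen k i m (hij.trans hjm).ne = -U3 := by
    rw [hU3, hw3, map_sub]
    simp [egen, hx3, hx6]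
    try abel
  -- multiplication relations
  have sq : ∀ a b : RIdx n →₀ k, ExteriorAlgebra.ι k a * ExteriorAlgebra.ι k a = 0 :=
    fun a _ => ExteriorAlgebra.ι_sq_zero a
  have s11 : U1 * U1 = 0 := ExteriorAlgebra.ι_sq_zero w1
  have s22 : U2 * U2 = 0 := ExteriorAlgebra.ι_sq_zero w2
  have s33 : U3 * U3 = 0 := ExteriorAlgebra.ι_sq_zero w3
  have sw21 : U2 * U1 = -(U1 * U2) := by
    rw [eq_neg_iff_add_eq_zero, add_comm]
    exact ExteriorAlgebra.ι_add_mul_swap w1 w2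
  have sw31 : U3 * U1 = -(U1 * U3) := by
    rw [eq_neg_iff_add_eq_zero, add_comm]
    exact ExteriorAlgebra.ι_add_mul_swap w1 w3
  have sw32 : U3 * U2 = -(U2 * U3) := by
    rw [eq_neg_iff_add_eq_zero, add_comm]
    exact ExteriorAlgebra.ι_add_mul_swap w2 w3
  -- triple products
  have t112 : U1 * (U1 * U2) = 0 := by rw [← mul_assoc, s11, zero_mul]
  have t212 : U2 * (U1 * U2) = 0 := by
    rw [← mul_assoc, sw21, neg_mul, mul_assoc, s22, mul_zero, neg_zero]
  have t312 : U3 * (U1 * U2) = U1 * (U2 * U3) := by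
    rw [← mul_assoc, sw31, neg_mul, mul_assoc, sw32, mul_neg, neg_neg]
  have t123 : U1 * (U2 * U3) = U1 * (U2 * U3) := rfl
  have t223 : U2 * (U2 * U3) = 0 := by rw [← mul_assoc, s22, zero_mul]
  have t323 : U3 * (U2 * U3) = 0 := by
    rw [← mul_assoc, sw32, neg_mul, mul_assoc, s33, mul_zero, neg_zero]
  have t113 : U1 * (U1 * U3) = 0 := by rw [← mul_assoc, s11, zero_mul]
  have t213 : U2 * (U1 * U3) = -(U1 * (U2 * U3)) := by
    rw [← mul_assoc, sw21, neg_mul, mul_assoc]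
  have t313 : U3 * (U1 * U3) = 0 := by
    rw [← mul_assoc, sw31, neg_mul, mul_assoc, s33, mul_zero, neg_zero]
  constructor
  · rw [hιv, hE1, hE2, hE2', hE3, neg_mul_neg]
    rw [mul_sub, add_mul, add_mul]
    simp only [add_mul, mul_add, smul_mul_assoc, mul_smul_comm, smul_smul, mul_assoc, t112, t212, t312,
      t223, t323, smul_zero, smul_sub]
    module
  · rw [hιv, hE1, hE2, hE1', hE3', neg_mul_neg, mul_neg]
    rw [mul_sub, add_mul, add_mul]
    simp only [add_mul, mul_add, smul_mul_assoc, mul_smul_comm, smul_smul, mul_assoc, t112, t212, t312,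
      t113, t213, t313, smul_zero, smul_sub, smul_neg, mul_neg]
    module
end

section
/- Let n ≥ 3, let a = Σ_{p≠q} a_{p,q} e_{p,q} ∈ E¹, and let 1 ≤ i < j ≤ n and k ∉ {i,j}. Then in the exterior algebra E, a · τ^k_{i,j} = (a_{j,i} + a_{k,i}) e_{j,i} e_{k,i} (e_{k,j} − e_{i,j}) − (a_{i,j} + a_{k,j}) e_{i,j} e_{k,j} (e_{k,i} − e_{j,i}) + (a_{i,k} e_{i,k} + a_{j,k} e_{j,k}) τ^k_{i,j} + Σ_{{p,q} ⊄ {i,j,k}} a_{p,q} e_{p,q} τ^k_{i,j}, where the last sum is over all ordered pairs (p,q) with p ≠ q and {p,q} not contained in {i,j,k}. -/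
section auxLemmas
open ExteriorAlgebra
variable {k : Type} [Field k] {M : Type*} [AddCommGroup M] [Module k M]

lemma ι_anticomm' (x y : M) : ι k x * ι k y = -(ι k y * ι k x) :=
  eq_neg_of_add_eq_zero_left (ι_add_mul_swap x y)

lemma triple_zero' (x y : M) : ι k x * ι k y * ι k x = 0 := by
  rw [mul_assoc, ι_anticomm' y x, mul_neg, ← mul_assoc, ι_sq_zero, zero_mul, neg_zero]

lemma swap23' (x y z : M) : ι k x * ι k y * ι k z = -(ι k x * ι k z * ι k y) := by
  rw [mul_assoc, ι_anticomm' y z, mul_neg, mul_assoc]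

lemma swap12' (x y z : M) : ι k x * ι k y * ι k z = -(ι k y * ι k x * ι k z) := by
  rw [ι_anticomm' x y, neg_mul]

lemma tauL1 (a b : M) : ι k b * (ι k a - ι k b) = ι k b * ι k a := by
  rw [mul_sub, ι_sq_zero, sub_zero]

lemma tauL2 (a b : M) : ι k a * (ι k a - ι k b) = ι k b * ι k a := by
  rw [mul_sub, ι_sq_zero, ι_anticomm' a b, zero_sub, neg_neg]

lemma tauL3 (a b c d : M) :
    ι k d * ((ι k a - ι k b) * (ι k c - ι k d)) = -(ι k d * ι k c * (ι k a - ι k b)) := by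
  have e1 : ι k d * ((ι k a - ι k b) * (ι k c - ι k d)) =
      ι k d * ι k a * ι k c - ι k d * ι k a * ι k d
        - ι k d * ι k b * ι k c + ι k d * ι k b * ι k d := by noncomm_ring
  have e2 : -(ι k d * ι k c * (ι k a - ι k b)) =
      -(ι k d * ι k c * ι k a) + ι k d * ι k c * ι k b := by noncomm_ring
  rw [e1, e2, triple_zero' d a, triple_zero' d b, swap23' d a c, swap23' d b c]
  abel

lemma tauL4 (a b c d : M) :
    ι k c * ((ι k a - ι k b) * (ι k c - ι k d)) = -(ι k d * ι k c * (ι k a - ι k b)) := by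
  have e1 : ι k c * ((ι k a - ι k b) * (ι k c - ι k d)) =
      ι k c * ι k a * ι k c - ι k c * ι k a * ι k d
        - ι k c * ι k b * ι k c + ι k c * ι k b * ι k d := by noncomm_ring
  have e2 : -(ι k d * ι k c * (ι k a - ι k b)) =
      -(ι k d * ι k c * ι k a) + ι k d * ι k c * ι k b := by noncomm_ring
  rw [e1, e2, triple_zero' c a, triple_zero' c b, swap12' d c a, swap12' d c b,
    swap23' c d a, swap23' c d b]
  abel

lemma caseB1 (a b : M) (x : ExteriorAlgebra k M) :
    ι k b * ((ι k a - ι k b) * x) = ι k b * ι k a * x := by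
  rw [← mul_assoc, tauL1]

lemma caseB2 (a b : M) (x : ExteriorAlgebra k M) :
    ι k a * ((ι k a - ι k b) * x) = ι k b * ι k a * x := by
  rw [← mul_assoc, tauL2]

end auxLemmas

lemma egen'_mk (k : Type) [Field k] {n : ℕ} (p q : Fin n) (h : p ≠ q) :
    egen' k ⟨(p, q), h⟩ = egen k p q h := rfl

/-- For `n ≥ 3`, `a = Σ a_{p,q} e_{p,q} ∈ E¹`, `i < j`, and `m ∉ {i,j}`:
`a·τ^m_{i,j} = (a_{j,i} + a_{m,i}) e_{j,i} e_{m,i} (e_{m,j} − e_{i,j})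
  − (a_{i,j} + a_{m,j}) e_{i,j} e_{m,j} (e_{m,i} − e_{j,i})
  + (a_{i,m} e_{i,m} + a_{j,m} e_{j,m}) τ^m_{i,j}
  + Σ_{{p,q} ⊄ {i,j,m}} a_{p,q} e_{p,q} τ^m_{i,j}`,
the last sum being over all ordered pairs `(p,q)`, `p ≠ q`, with `{p,q} ⊄ {i,j,m}`. -/
theorem mul_tau_formula
    (k : Type) [Field k] [CharZero k] (n : ℕ) (hn : 3 ≤ n)
    (v : RIdx n →₀ k) (i j m : Fin n) (hij : i < j) (hmi : m ≠ i) (hmj : m ≠ j) :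
    ExteriorAlgebra.ι k v *
        ((egen k m i hmi - egen k j i hij.ne') * (egen k m j hmj - egen k i j hij.ne)) =
      (v ⟨(j, i), hij.ne'⟩ + v ⟨(m, i), hmi⟩) •
          (egen k j i hij.ne' * egen k m i hmi * (egen k m j hmj - egen k i j hij.ne)) -
        (v ⟨(i, j), hij.ne⟩ + v ⟨(m, j), hmj⟩) •
          (egen k i j hij.ne * egen k m j hmj * (egen k m i hmi - egen k j i hij.ne')) +
        (v ⟨(i, m), hmi.symm⟩ • egen k i m hmi.symm +
            v ⟨(j, m), hmj.symm⟩ • egen k j m hmj.symm) *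
          ((egen k m i hmi - egen k j i hij.ne') * (egen k m j hmj - egen k i j hij.ne)) +
        ∑ x ∈ Finset.univ.filter
            (fun x : RIdx n => ¬ (({x.1.1, x.1.2} : Finset (Fin n)) ⊆ {i, j, m})),
          v x • (egen' k x *
            ((egen k m i hmi - egen k j i hij.ne') *
              (egen k m j hmj - egen k i j hij.ne))) := by
  induction v using Finsupp.induction_linear with
  | zero =>
    simp only [map_zero, zero_mul, Finsupp.coe_zero, Pi.zero_apply, zero_add, add_zero,
      zero_smul, smul_zero, mul_zero, sub_zero, Finset.sum_const_zero]
  | add f g hf hg =>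
    rw [map_add, add_mul, hf, hg]
    simp only [Finsupp.add_apply, add_smul, add_mul, Finset.sum_add_distrib]
    abel
  | single x c =>
    have hι : (ExteriorAlgebra.ι k (Finsupp.single x c) : Egen k n) = c • egen' k x := by
      rw [← Finsupp.smul_single_one, map_smul]; rfl
    have hii : i ≠ j := hij.ne
    simp only [Finsupp.single_apply, ite_smul, zero_smul]
    rw [Finset.sum_ite_eq]
    by_cases hsub : ({x.1.1, x.1.2} : Finset (Fin n)) ⊆ ({i, j, m} : Finset (Fin n))
    · obtain ⟨⟨p, q⟩, hpq⟩ := x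
      simp only [Finset.insert_subset_iff, Finset.singleton_subset_iff,
        Finset.mem_insert, Finset.mem_singleton] at hsub
      have hmem : (⟨(p, q), hpq⟩ : RIdx n) ∉ Finset.univ.filter
          (fun x : RIdx n => ¬ (({x.1.1, x.1.2} : Finset (Fin n)) ⊆ {i, j, m})) := by
        simp only [Finset.mem_filter, Finset.mem_univ, true_and, not_not]
        intro r hr
        simp only [Finset.mem_insert, Finset.mem_singleton] at hr
        rcases hr with rfl | rfl
        · simpa [Finset.insert_subset_iff] using hsub.1
        · simpa [Finset.insert_subset_iff] using hsub.2
      rw [if_neg hmem]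
      obtain ⟨hp, hq⟩ := hsub
      rcases hp with rfl | rfl | rfl <;> rcases hq with rfl | rfl | rfl <;>
        simp only [Subtype.mk.injEq, Prod.mk.injEq, hii, hii.symm, hmi, hmi.symm,
          hmj, hmj.symm, and_true, true_and, and_false, false_and, and_self,
          if_true, if_false, ite_true, ite_false, add_zero, zero_add, zero_smul,
          smul_zero, zero_mul, sub_zero, zero_sub, mul_zero, smul_mul_assoc]
      · exact absurd rfl hpq
      · -- (i, j)
        rw [hι, smul_mul_assoc, ← smul_neg]
        congr 1
        exact tauL3 _ _ _ _
      · -- (i, m)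
        rw [hι, smul_mul_assoc]
        rfl
      · -- (j, i)
        rw [hι, smul_mul_assoc]
        congr 1
        exact caseB1 _ _ _
      · exact absurd rfl hpq
      · -- (j, m)
        rw [hι, smul_mul_assoc]
        rfl
      · -- (m, i)
        rw [hι, smul_mul_assoc]
        congr 1
        exact caseB2 _ _ _
      · -- (m, j)
        rw [hι, smul_mul_assoc, ← smul_neg]
        congr 1
        exact tauL4 _ _ _ _
      · exact absurd rfl hpq
    · have hmem : x ∈ Finset.univ.filter
          (fun x : RIdx n => ¬ (({x.1.1, x.1.2} : Finset (Fin n)) ⊆ {i, j, m})) :=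
        Finset.mem_filter.2 ⟨Finset.mem_univ _, hsub⟩
      have h1 : x ≠ ⟨(j, i), hij.ne'⟩ := by
        rintro rfl; exact hsub (by simp [Finset.insert_subset_iff])
      have h2 : x ≠ ⟨(m, i), hmi⟩ := by
        rintro rfl; exact hsub (by simp [Finset.insert_subset_iff])
      have h3 : x ≠ ⟨(i, j), hij.ne⟩ := by
        rintro rfl; exact hsub (by simp [Finset.insert_subset_iff])
      have h4 : x ≠ ⟨(m, j), hmj⟩ := by
        rintro rfl; exact hsub (by simp [Finset.insert_subset_iff])
      have h5 : x ≠ ⟨(i, m), hmi.symm⟩ := by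
        rintro rfl; exact hsub (by simp [Finset.insert_subset_iff])
      have h6 : x ≠ ⟨(j, m), hmj.symm⟩ := by
        rintro rfl; exact hsub (by simp [Finset.insert_subset_iff])
      rw [if_neg h1, if_neg h2, if_neg h3, if_neg h4, if_neg h5, if_neg h6, if_pos hmem,
        hι, smul_mul_assoc]
      simp only [add_zero, zero_add, zero_smul, smul_zero, zero_mul, sub_zero, zero_sub]
end

section
/- Let n = 3 and let a ∈ E¹ with a ∉ C_{1,2} ∪ C_{1,3} ∪ C_{2,3} ∪ C_{1,2,3}. Then the map ψ_a : I² → E³, x ↦ a·x, is injective, where I² = I ∩ E²; consequently a does not lie in the first resonance variety R¹ of A = E/I. -/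
/-- The subspace `C_{i,j} = span{e_{i,j}, e_{j,i}}` of `E¹ = A¹`. -/
noncomputable def resC2E (k : Type) [Field k] (n : ℕ) (i j : Fin n) (hij : i ≠ j) :
    Submodule k (Egen k n) :=
  Submodule.span k {egen k i j hij, egen k j i hij.symm}

/-- The subspace `C_{i,j,m} = span{e_{j,i} − e_{m,i}, e_{i,j} − e_{m,j}, e_{i,m} − e_{j,m}}`
of `E¹ = A¹`. -/
noncomputable def resC3E (k : Type) [Field k] (n : ℕ) (i j m : Fin n)
    (hij : i ≠ j) (him : i ≠ m) (hjm : j ≠ m) : Submodule k (Egen k n) :=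
  Submodule.span k {egen k j i hij.symm - egen k m i him.symm,
                    egen k i j hij - egen k m j hjm.symm,
                    egen k i m him - egen k j m hjm}
noncomputable section N3Aux
open ExteriorAlgebra

namespace N3A

variable (k : Type) [Field k]

abbrev Vk := RIdx 3 →₀ k
abbrev Ek := Egen k 3

def j1 : RIdx 3 := ⟨(0,1), by decide⟩
def j2 : RIdx 3 := ⟨(1,0), by decide⟩
def j3 : RIdx 3 := ⟨(0,2), by decide⟩
def j4 : RIdx 3 := ⟨(2,0), by decide⟩
def j5 : RIdx 3 := ⟨(1,2), by decide⟩
def j6 : RIdx 3 := ⟨(2,1), by decide⟩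

def bb (t : RIdx 3) : Vk k := Finsupp.single t 1

def ee (t : RIdx 3) : Ek k := ι k (bb k t)

def G : Fin 6 → Ek k :=
  ![ee k j1 * ee k j2, ee k j3 * ee k j4, ee k j5 * ee k j6,
    (ee k j4 - ee k j2) * (ee k j6 - ee k j1),
    (ee k j2 - ee k j4) * (ee k j5 - ee k j3),
    (ee k j1 - ee k j6) * (ee k j3 - ee k j5)]

def W : Submodule k (Ek k) := Submodule.span k (Set.range (G k))

/-! ### Linear functionals on the exterior algebra -/

def alt3 (t : Fin 3 → RIdx 3) : (Vk k) [⋀^Fin 3]→ₗ[k] k :=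
  (Matrix.detRowAlternating : (Fin 3 → k) [⋀^Fin 3]→ₗ[k] k).compLinearMap
    (LinearMap.pi fun i => Finsupp.lapply (t i))

def phi (t : Fin 3 → RIdx 3) : Ek k →ₗ[k] k :=
  liftAlternating (Function.update (0 : ∀ i, (Vk k) [⋀^Fin i]→ₗ[k] k) 3 (alt3 k t))

theorem phi_triple (t : Fin 3 → RIdx 3) (x y z : Vk k) :
    phi k t (ι k x * (ι k y * ι k z)) =
      x (t 0) * (y (t 1) * z (t 2) - y (t 2) * z (t 1))
      - x (t 1) * (y (t 0) * z (t 2) - y (t 2) * z (t 0))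
      + x (t 2) * (y (t 0) * z (t 1) - y (t 1) * z (t 0)) := by
  have h : ι k x * (ι k y * ι k z) = ιMulti k 3 ![x, y, z] := by
    simp [ιMulti_apply, List.ofFn_succ, mul_assoc]
  rw [h, phi, liftAlternating_apply_ιMulti, Function.update_self, alt3,
    AlternatingMap.compLinearMap_apply]
  show Matrix.det (Matrix.of _) = _
  rw [Matrix.det_fin_three]
  simp only [Matrix.of_apply, LinearMap.pi_apply, Finsupp.lapply_apply, ZeroHom.toFun_eq_coe,
    AddMonoidHom.toZeroHom_coe, Finsupp.applyAddHom_apply]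
  simp only [Matrix.cons_val_zero, Matrix.cons_val_one, Matrix.head_cons,
    Matrix.cons_val_two, Matrix.tail_cons]
  ring

def alt2 (t : Fin 2 → RIdx 3) : (Vk k) [⋀^Fin 2]→ₗ[k] k :=
  (Matrix.detRowAlternating : (Fin 2 → k) [⋀^Fin 2]→ₗ[k] k).compLinearMap
    (LinearMap.pi fun i => Finsupp.lapply (t i))

def phi2 (t : Fin 2 → RIdx 3) : Ek k →ₗ[k] k :=
  liftAlternating (Function.update (0 : ∀ i, (Vk k) [⋀^Fin i]→ₗ[k] k) 2 (alt2 k t))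

theorem phi2_pair (t : Fin 2 → RIdx 3) (x y : Vk k) :
    phi2 k t (ι k x * ι k y) = x (t 0) * y (t 1) - x (t 1) * y (t 0) := by
  have h : ι k x * ι k y = ιMulti k 2 ![x, y] := by
    simp [ιMulti_apply, List.ofFn_succ, mul_assoc]
  rw [h, phi2, liftAlternating_apply_ιMulti, Function.update_self, alt2,
    AlternatingMap.compLinearMap_apply]
  show Matrix.det (Matrix.of _) = _
  rw [Matrix.det_fin_two]
  simp only [Matrix.of_apply, LinearMap.pi_apply, Finsupp.lapply_apply, ZeroHom.toFun_eq_coe,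
    AddMonoidHom.toZeroHom_coe, Finsupp.applyAddHom_apply]
  simp only [Matrix.cons_val_zero, Matrix.cons_val_one, Matrix.head_cons]

/-! ### Degree memberships -/

theorem ι_mem1 (x : Vk k) : ι k x ∈ ⋀[k]^1 (Vk k) := by
  show _ ∈ LinearMap.range (ι k) ^ 1
  rw [pow_one]; exact LinearMap.mem_range_self _ x

theorem mul_mem2 {x y : Ek k} (hx : x ∈ ⋀[k]^1 (Vk k)) (hy : y ∈ ⋀[k]^1 (Vk k)) :
    x * y ∈ ⋀[k]^2 (Vk k) :=
  SetLike.mul_mem_graded hx hy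

/-! ### `I² ⊆ W` -/

set_option maxHeartbeats 1000000 in
theorem proj2_mem (a b g : Ek k) (hg2 : g ∈ ⋀[k]^2 (Vk k)) (hgW : g ∈ W k) :
    GradedRing.proj (fun i : ℕ => ⋀[k]^i (Vk k)) 2 (a * g * b) ∈ W k := by
  classical
  set 𝒜 := fun i : ℕ => ⋀[k]^i (Vk k) with h𝒜
  rw [← DirectSum.sum_support_decompose 𝒜 a, ← DirectSum.sum_support_decompose 𝒜 b,
    Finset.sum_mul, Finset.sum_mul_sum, map_sum]
  refine Submodule.sum_mem _ fun n _ => ?_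
  rw [map_sum]
  refine Submodule.sum_mem _ fun m _ => ?_
  have tmem : ((DirectSum.decompose 𝒜 a n : Ek k) * g * (DirectSum.decompose 𝒜 b m : Ek k))
      ∈ 𝒜 (n + 2 + m) :=
    SetLike.mul_mem_graded (SetLike.mul_mem_graded (DirectSum.decompose 𝒜 a n).2 hg2)
      (DirectSum.decompose 𝒜 b m).2
  by_cases h : n = 0 ∧ m = 0
  · obtain ⟨rfl, rfl⟩ := h
    rw [GradedRing.proj_apply, DirectSum.decompose_of_mem_same 𝒜 tmem]
    have ha0 : (DirectSum.decompose 𝒜 a 0 : Ek k) ∈ LinearMap.range (ι k (M := Vk k)) ^ 0 :=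
      (DirectSum.decompose 𝒜 a 0).2
    have hb0 : (DirectSum.decompose 𝒜 b 0 : Ek k) ∈ LinearMap.range (ι k (M := Vk k)) ^ 0 :=
      (DirectSum.decompose 𝒜 b 0).2
    rw [pow_zero] at ha0 hb0
    obtain ⟨r, hr⟩ := Submodule.mem_one.mp ha0
    obtain ⟨s, hs⟩ := Submodule.mem_one.mp hb0
    have heq : ((DirectSum.decompose 𝒜 a 0 : Ek k) * g * (DirectSum.decompose 𝒜 b 0 : Ek k))
        = r • s • g := by
      rw [← hr, ← hs, mul_assoc, ← Algebra.commutes s g, ← Algebra.smul_def, ← Algebra.smul_def]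
    rw [heq]
    exact Submodule.smul_mem _ _ (Submodule.smul_mem _ _ hgW)
  · rw [GradedRing.proj_apply, DirectSum.decompose_of_mem_ne 𝒜 tmem (by omega)]
    exact Submodule.zero_mem _

theorem mem_W_of_I2 (x : Ek k) (hx : x ∈ resI2 k 3) : x ∈ W k := by
  obtain ⟨hxI, hx2⟩ := hx
  have hproj : GradedRing.proj (fun i : ℕ => ⋀[k]^i (Vk k)) 2 x = x := by
    rw [GradedRing.proj_apply, DirectSum.decompose_of_mem_same (fun i : ℕ => ⋀[k]^i (Vk k)) hx2]
  rw [← hproj]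
  have hxI' : x ∈ resIdeal k 3 := hxI
  rw [resIdeal, TwoSidedIdeal.mem_span_iff_mem_addSubgroup_closure] at hxI'
  clear hproj hx2 hxI
  induction hxI' using AddSubgroup.closure_induction with
  | mem w hw =>
    obtain ⟨u, hu, c, -, rfl⟩ := hw
    obtain ⟨a, -, s, hs, rfl⟩ := hu
    rcases hs with h | h
    · obtain ⟨i, j, hij, rfl⟩ := h
      fin_cases i <;> fin_cases j <;>
        first
          | exact absurd hij (by decide)
          | exact proj2_mem k a c _ (mul_mem2 k (ι_mem1 k _) (ι_mem1 k _))
              (Submodule.subset_span ⟨0, rfl⟩)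
          | exact proj2_mem k a c _ (mul_mem2 k (ι_mem1 k _) (ι_mem1 k _))
              (Submodule.subset_span ⟨1, rfl⟩)
          | exact proj2_mem k a c _ (mul_mem2 k (ι_mem1 k _) (ι_mem1 k _))
              (Submodule.subset_span ⟨2, rfl⟩)
    · obtain ⟨i, j, m, hij, hmi, hmj, rfl⟩ := h
      fin_cases i <;> fin_cases j <;> fin_cases m <;>
        first
          | exact absurd hij (by decide)
          | exact absurd hmi (by decide)
          | exact absurd hmj (by decide)
          | exact proj2_mem k a c _
              (mul_mem2 k (Submodule.sub_mem _ (ι_mem1 k _) (ι_mem1 k _))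
                (Submodule.sub_mem _ (ι_mem1 k _) (ι_mem1 k _)))
              (Submodule.subset_span ⟨3, rfl⟩)
          | exact proj2_mem k a c _
              (mul_mem2 k (Submodule.sub_mem _ (ι_mem1 k _) (ι_mem1 k _))
                (Submodule.sub_mem _ (ι_mem1 k _) (ι_mem1 k _)))
              (Submodule.subset_span ⟨4, rfl⟩)
          | exact proj2_mem k a c _
              (mul_mem2 k (Submodule.sub_mem _ (ι_mem1 k _) (ι_mem1 k _))
                (Submodule.sub_mem _ (ι_mem1 k _) (ι_mem1 k _)))
              (Submodule.subset_span ⟨5, rfl⟩)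
  | zero => simpa using Submodule.zero_mem (W k)
  | add y z _ _ hy hz => rw [map_add]; exact Submodule.add_mem _ hy hz
  | neg y _ hy => rw [map_neg]; exact Submodule.neg_mem _ hy

end N3A
end N3Aux
noncomputable section N3Aux2
open ExteriorAlgebra

namespace N3A

variable (k : Type) [Field k]

theorem bb_apply (s t : RIdx 3) : bb k s t = if s = t then 1 else 0 :=
  Finsupp.single_apply

theorem G0 : G k 0 = ee k j1 * ee k j2 := rfl
theorem G1 : G k 1 = ee k j3 * ee k j4 := rfl
theorem G2 : G k 2 = ee k j5 * ee k j6 := rfl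
theorem G3 : G k 3 = (ee k j4 - ee k j2) * (ee k j6 - ee k j1) := rfl
theorem G4 : G k 4 = (ee k j2 - ee k j4) * (ee k j5 - ee k j3) := rfl
theorem G5 : G k 5 = (ee k j1 - ee k j6) * (ee k j3 - ee k j5) := rfl

theorem vdecomp (v : Vk k) :
    v = v j1 • bb k j1 + v j2 • bb k j2 + v j3 • bb k j3 + v j4 • bb k j4
      + v j5 • bb k j5 + v j6 • bb k j6 := by
  ext t
  obtain ⟨⟨p, q⟩, h⟩ := t
  fin_cases p <;> fin_cases q <;>
    first
      | exact absurd rfl h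
      | (simp (config := { decide := true }) [bb_apply, j1, j2, j3, j4, j5, j6,
          Subtype.mk.injEq, Prod.mk.injEq, Fin.ext_iff]; try rfl)

theorem iota_decomp (v : Vk k) :
    ι k v = v j1 • ee k j1 + v j2 • ee k j2 + v j3 • ee k j3 + v j4 • ee k j4
      + v j5 • ee k j5 + v j6 • ee k j6 := by
  conv_lhs => rw [vdecomp k v]
  simp only [map_add, map_smul, ee]

theorem memC2_01 (v : Vk k) (h3 : v j3 = 0) (h4 : v j4 = 0) (h5 : v j5 = 0) (h6 : v j6 = 0) :
    ι k v ∈ resC2E k 3 0 1 (by decide) := by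
  rw [resC2E, Submodule.mem_span_pair]
  refine ⟨v j1, v j2, ?_⟩
  rw [iota_decomp k v, h3, h4, h5, h6]
  simp only [zero_smul, add_zero]
  rfl

theorem memC2_02 (v : Vk k) (h1 : v j1 = 0) (h2 : v j2 = 0) (h5 : v j5 = 0) (h6 : v j6 = 0) :
    ι k v ∈ resC2E k 3 0 2 (by decide) := by
  rw [resC2E, Submodule.mem_span_pair]
  refine ⟨v j3, v j4, ?_⟩
  rw [iota_decomp k v, h1, h2, h5, h6]
  simp only [zero_smul, add_zero, zero_add]
  rfl

theorem memC2_12 (v : Vk k) (h1 : v j1 = 0) (h2 : v j2 = 0) (h3 : v j3 = 0) (h4 : v j4 = 0) :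
    ι k v ∈ resC2E k 3 1 2 (by decide) := by
  rw [resC2E, Submodule.mem_span_pair]
  refine ⟨v j5, v j6, ?_⟩
  rw [iota_decomp k v, h1, h2, h3, h4]
  simp only [zero_smul, add_zero, zero_add]
  rfl

theorem memC3 (v : Vk k) (h24 : v j2 + v j4 = 0) (h16 : v j1 + v j6 = 0)
    (h35 : v j3 + v j5 = 0) :
    ι k v ∈ resC3E k 3 0 1 2 (by decide) (by decide) (by decide) := by
  rw [resC3E]
  have hv4 : v j4 = -v j2 := by linear_combination h24
  have hv6 : v j6 = -v j1 := by linear_combination h16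
  have hv5 : v j5 = -v j3 := by linear_combination h35
  have hrep : ι k v = v j2 • (ee k j2 - ee k j4) + v j1 • (ee k j1 - ee k j6)
      + v j3 • (ee k j3 - ee k j5) := by
    rw [iota_decomp k v, hv4, hv6, hv5]
    module
  rw [hrep]
  refine Submodule.add_mem _ (Submodule.add_mem _ ?_ ?_) ?_ <;>
    refine Submodule.smul_mem _ _ (Submodule.subset_span ?_)
  · exact Set.mem_insert _ _
  · exact Set.mem_insert_of_mem _ (Set.mem_insert _ _)
  · exact Set.mem_insert_of_mem _ (Set.mem_insert_of_mem _ rfl)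

theorem dep (v w : Vk k) (hv : v ≠ 0) (h : ι k v * ι k w = 0) : ∃ lam : k, w = lam • v := by
  obtain ⟨t0, ht0⟩ := Finsupp.ne_iff.mp hv
  have ht0' : v t0 ≠ 0 := by simpa using ht0
  refine ⟨w t0 / v t0, ?_⟩
  ext t
  have hm : phi2 k ![t0, t] (ι k v * ι k w) = 0 := by rw [h, map_zero]
  rw [phi2_pair] at hm
  simp only [Matrix.cons_val_zero, Matrix.cons_val_one, Matrix.head_cons] at hm
  have hw : w t = w t0 / v t0 * v t := by
    field_simp
    linear_combination hm
  simpa [Finsupp.smul_apply, smul_eq_mul] using hw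

theorem key (v1 v2 v3 v4 v5 v6 c1 c2 c3 c4 c5 c6 : k)
    (P1 : ¬(v3 = 0 ∧ v4 = 0 ∧ v5 = 0 ∧ v6 = 0))
    (P2 : ¬(v1 = 0 ∧ v2 = 0 ∧ v5 = 0 ∧ v6 = 0))
    (P3 : ¬(v1 = 0 ∧ v2 = 0 ∧ v3 = 0 ∧ v4 = 0))
    (P4 : ¬(v2 + v4 = 0 ∧ v1 + v6 = 0 ∧ v3 + v5 = 0))
    (h123 : -(v1*c5) - v2*c6 + v3*c1 - v3*c4 = 0)
    (h124 : -(v2*c4) + v4*c1 - v4*c4 = 0)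
    (h125 : v1*c5 + v2*c6 + v5*c1 - v5*c4 = 0)
    (h126 : -(v1*c4) + v6*c1 - v6*c4 = 0)
    (h134 : v1*c2 - v1*c5 - v3*c4 + v4*c6 = 0)
    (h135 : v3*c6 + v5*c6 = 0)
    (h136 : v1*c6 + v6*c6 = 0)
    (h145 : -(v1*c5) + v4*c6 + v5*c4 = 0)
    (h146 : v1*c4 + v6*c4 = 0)
    (h156 : v1*c3 - v1*c6 - v6*c6 = 0)
    (h234 : v2*c2 - v2*c5 - v4*c5 = 0)
    (h235 : -(v3*c5) - v5*c5 = 0)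
    (h236 : v2*c6 + v3*c4 - v6*c5 = 0)
    (h245 : -(v2*c5) - v4*c5 = 0)
    (h246 : v2*c4 + v4*c4 = 0)
    (h256 : v2*c3 - v2*c6 + v5*c4 + v6*c5 = 0)
    (h345 : -(v3*c5) + v5*c2 - v5*c5 = 0)
    (h346 : v3*c4 - v4*c6 + v6*c2 - v6*c5 = 0)
    (h356 : v3*c3 - v3*c6 - v5*c6 = 0)
    (h456 : v4*c3 - v4*c6 - v5*c4 - v6*c5 = 0) :
    c1 = 0 ∧ c2 = 0 ∧ c3 = 0 ∧ c4 = 0 ∧ c5 = 0 ∧ c6 = 0 := by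
  have kill2 : ∀ {u w c : k}, u + w ≠ 0 → u * c = 0 → w * c = 0 → c = 0 := by
    intro u w c h h1 h2
    have h3 : (u + w) * c = 0 := by linear_combination h1 + h2
    exact (mul_eq_zero.mp h3).resolve_left h
  have nz : ∀ {u c : k}, u * c = 0 → c ≠ 0 → u = 0 := by
    intro u c h hc
    rcases mul_eq_zero.mp h with h' | h'
    · exact h'
    · exact absurd h' hc
  have hc456 : c4 = 0 ∧ c5 = 0 ∧ c6 = 0 := by
    by_cases hs1 : v1 + v6 = 0
    · by_cases hs2 : v2 + v4 = 0
      · -- branch A : v3 + v5 ≠ 0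
        have hs3 : v3 + v5 ≠ 0 := fun hh => P4 ⟨hs2, hs1, hh⟩
        have hc5 : c5 = 0 := by
          have h' : (v3 + v5) * c5 = 0 := by linear_combination -h235
          exact (mul_eq_zero.mp h').resolve_left hs3
        have hc6 : c6 = 0 := by
          have h' : (v3 + v5) * c6 = 0 := by linear_combination h135
          exact (mul_eq_zero.mp h').resolve_left hs3
        have hc4 : c4 = 0 := by
          have h' : (v3 + v5) * c4 = 0 := by
            linear_combination h236 - v2*hc6 + v6*hc5 + h145 + v1*hc5 - v4*hc6
          exact (mul_eq_zero.mp h').resolve_left hs3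
        exact ⟨hc4, hc5, hc6⟩
      · -- branch B : v2 + v4 ≠ 0
        have hc4 : c4 = 0 := by
          have h' : (v2 + v4) * c4 = 0 := by linear_combination h246
          exact (mul_eq_zero.mp h').resolve_left hs2
        have hc5 : c5 = 0 := by
          have h' : (v2 + v4) * c5 = 0 := by linear_combination -h245
          exact (mul_eq_zero.mp h').resolve_left hs2
        have hc6 : c6 = 0 := by
          have h' : (v2 + v4) * c6 = 0 := by
            linear_combination h236 - v3*hc4 + v6*hc5 + h145 + v1*hc5 - v5*hc4
          exact (mul_eq_zero.mp h').resolve_left hs2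
        exact ⟨hc4, hc5, hc6⟩
    · -- branch C : v1 + v6 ≠ 0
      have hc4 : c4 = 0 := by
        have h' : (v1 + v6) * c4 = 0 := by linear_combination h146
        exact (mul_eq_zero.mp h').resolve_left hs1
      have hc6 : c6 = 0 := by
        have h' : (v1 + v6) * c6 = 0 := by linear_combination h136
        exact (mul_eq_zero.mp h').resolve_left hs1
      have hc5 : c5 = 0 := by
        have h' : (v1 + v6) * c5 = 0 := by
          linear_combination -h145 + v4*hc6 + v5*hc4 - h236 + v2*hc6 + v3*hc4
        exact (mul_eq_zero.mp h').resolve_left hs1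
      exact ⟨hc4, hc5, hc6⟩
  obtain ⟨hc4, hc5, hc6⟩ := hc456
  have hc1 : c1 = 0 := by
    by_cases h : c1 = 0
    · exact h
    · exact absurd ⟨nz (by linear_combination h123 + v1*hc5 + v2*hc6 + v3*hc4 : v3 * c1 = 0) h,
        nz (by linear_combination h124 + v2*hc4 + v4*hc4 : v4 * c1 = 0) h,
        nz (by linear_combination h125 - v1*hc5 - v2*hc6 + v5*hc4 : v5 * c1 = 0) h,
        nz (by linear_combination h126 + v1*hc4 + v6*hc4 : v6 * c1 = 0) h⟩ P1
  have hc2 : c2 = 0 := by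
    by_cases h : c2 = 0
    · exact h
    · exact absurd ⟨nz (by linear_combination h134 + v1*hc5 + v3*hc4 - v4*hc6 : v1 * c2 = 0) h,
        nz (by linear_combination h234 + v2*hc5 + v4*hc5 : v2 * c2 = 0) h,
        nz (by linear_combination h345 + v3*hc5 + v5*hc5 : v5 * c2 = 0) h,
        nz (by linear_combination h346 - v3*hc4 + v4*hc6 + v6*hc5 : v6 * c2 = 0) h⟩ P2
  have hc3 : c3 = 0 := by
    by_cases h : c3 = 0
    · exact h
    · exact absurd ⟨nz (by linear_combination h156 + v1*hc6 + v6*hc6 : v1 * c3 = 0) h,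
        nz (by linear_combination h256 + v2*hc6 - v5*hc4 - v6*hc5 : v2 * c3 = 0) h,
        nz (by linear_combination h356 + v3*hc6 + v5*hc6 : v3 * c3 = 0) h,
        nz (by linear_combination h456 + v4*hc6 + v5*hc4 + v6*hc5 : v4 * c3 = 0) h⟩ P3
  exact ⟨hc1, hc2, hc3, hc4, hc5, hc6⟩

end N3A
end N3Aux2
open ExteriorAlgebra N3A
set_option maxHeartbeats 1000000
/-- **Case 2, n = 3.** If `a ∈ E¹` does not lie in `C_{1,2} ∪ C_{1,3} ∪ C_{2,3} ∪ C_{1,2,3}`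
then `ψ_a : I² → E³` is injective; consequently `a ∉ R¹`. -/
theorem n3_psi_injective
    (k : Type) [Field k] [IsAlgClosed k] [CharZero k]
    (a : Egen k 3) (ha1 : a ∈ ⋀[k]^1 (RIdx 3 →₀ k))
    (ha : a ∉ ((resC2E k 3 0 1 (by decide) : Set (Egen k 3)) ∪
          (resC2E k 3 0 2 (by decide) : Set (Egen k 3)) ∪
          (resC2E k 3 1 2 (by decide) : Set (Egen k 3)) ∪
          (resC3E k 3 0 1 2 (by decide) (by decide) (by decide) : Set (Egen k 3)))) :
    Function.Injective (resPsi k 3 a) ∧ resπ k 3 a ∉ resR1 k 3 := by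
  classical
  obtain ⟨v, hv⟩ : ∃ v : RIdx 3 →₀ k, a = ι k v := by
    have h1 : a ∈ LinearMap.range (ι k (M := RIdx 3 →₀ k)) ^ 1 := ha1
    rw [pow_one] at h1
    obtain ⟨v, hv⟩ := h1
    exact ⟨v, hv.symm⟩
  have P1 : ¬(v j3 = 0 ∧ v j4 = 0 ∧ v j5 = 0 ∧ v j6 = 0) := by
    rintro ⟨h3, h4, h5, h6⟩
    exact ha (Or.inl (Or.inl (Or.inl (by rw [hv]; exact memC2_01 k v h3 h4 h5 h6))))
  have P2 : ¬(v j1 = 0 ∧ v j2 = 0 ∧ v j5 = 0 ∧ v j6 = 0) := by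
    rintro ⟨h1, h2, h5, h6⟩
    exact ha (Or.inl (Or.inl (Or.inr (by rw [hv]; exact memC2_02 k v h1 h2 h5 h6))))
  have P3 : ¬(v j1 = 0 ∧ v j2 = 0 ∧ v j3 = 0 ∧ v j4 = 0) := by
    rintro ⟨h1, h2, h3, h4⟩
    exact ha (Or.inl (Or.inr (by rw [hv]; exact memC2_12 k v h1 h2 h3 h4)))
  have P4 : ¬(v j2 + v j4 = 0 ∧ v j1 + v j6 = 0 ∧ v j3 + v j5 = 0) := by
    rintro ⟨hA, hB, hC⟩
    exact ha (Or.inr (by rw [hv]; exact memC3 k v hA hB hC))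
  have hinj : Function.Injective (resPsi k 3 a) := by
    refine (injective_iff_map_eq_zero (resPsi k 3 a)).mpr ?_
    intro x hx0
    have hxW : (x : Egen k 3) ∈ W k := mem_W_of_I2 k _ x.2
    obtain ⟨c, hc⟩ := (Submodule.mem_span_range_iff_exists_fun k).mp hxW
    have hmul : ι k v * (∑ i, c i • G k i) = 0 := by
      rw [hc, ← hv]; exact hx0
    have hphi : ∀ t : Fin 3 → RIdx 3, ∑ i, c i * phi k t (ι k v * G k i) = 0 := by
      intro t
      have h1 : ι k v * (∑ i, c i • G k i) = ∑ i, c i • (ι k v * G k i) := by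
        rw [Finset.mul_sum]; simp_rw [mul_smul_comm]
      have h2 : phi k t (∑ i, c i • (ι k v * G k i)) = 0 := by
        rw [← h1, hmul, map_zero]
      simpa using h2
    have E123 : -(v j1 * c 4) - v j2 * c 5 + v j3 * c 0 - v j3 * c 3 = 0 := by
      have h := hphi ![j1, j2, j3]
      simp (config := { decide := true }) only [Fin.sum_univ_six, G0, G1, G2, G3, G4, G5, ee, ← map_sub, phi_triple, Matrix.cons_val_zero, Matrix.cons_val_one, Matrix.head_cons, Matrix.cons_val_two, Matrix.tail_cons, Finsupp.sub_apply, bb_apply, if_true, if_false] at h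
      linear_combination h
    have E124 : -(v j2 * c 3) + v j4 * c 0 - v j4 * c 3 = 0 := by
      have h := hphi ![j1, j2, j4]
      simp (config := { decide := true }) only [Fin.sum_univ_six, G0, G1, G2, G3, G4, G5, ee, ← map_sub, phi_triple, Matrix.cons_val_zero, Matrix.cons_val_one, Matrix.head_cons, Matrix.cons_val_two, Matrix.tail_cons, Finsupp.sub_apply, bb_apply, if_true, if_false] at h
      linear_combination h
    have E125 : v j1 * c 4 + v j2 * c 5 + v j5 * c 0 - v j5 * c 3 = 0 := by
      have h := hphi ![j1, j2, j5]
      simp (config := { decide := true }) only [Fin.sum_univ_six, G0, G1, G2, G3, G4, G5, ee, ← map_sub, phi_triple, Matrix.cons_val_zero, Matrix.cons_val_one, Matrix.head_cons, Matrix.cons_val_two, Matrix.tail_cons, Finsupp.sub_apply, bb_apply, if_true, if_false] at h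
      linear_combination h
    have E126 : -(v j1 * c 3) + v j6 * c 0 - v j6 * c 3 = 0 := by
      have h := hphi ![j1, j2, j6]
      simp (config := { decide := true }) only [Fin.sum_univ_six, G0, G1, G2, G3, G4, G5, ee, ← map_sub, phi_triple, Matrix.cons_val_zero, Matrix.cons_val_one, Matrix.head_cons, Matrix.cons_val_two, Matrix.tail_cons, Finsupp.sub_apply, bb_apply, if_true, if_false] at h
      linear_combination h
    have E134 : v j1 * c 1 - v j1 * c 4 - v j3 * c 3 + v j4 * c 5 = 0 := by
      have h := hphi ![j1, j3, j4]
      simp (config := { decide := true }) only [Fin.sum_univ_six, G0, G1, G2, G3, G4, G5, ee, ← map_sub, phi_triple, Matrix.cons_val_zero, Matrix.cons_val_one, Matrix.head_cons, Matrix.cons_val_two, Matrix.tail_cons, Finsupp.sub_apply, bb_apply, if_true, if_false] at h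
      linear_combination h
    have E135 : v j3 * c 5 + v j5 * c 5 = 0 := by
      have h := hphi ![j1, j3, j5]
      simp (config := { decide := true }) only [Fin.sum_univ_six, G0, G1, G2, G3, G4, G5, ee, ← map_sub, phi_triple, Matrix.cons_val_zero, Matrix.cons_val_one, Matrix.head_cons, Matrix.cons_val_two, Matrix.tail_cons, Finsupp.sub_apply, bb_apply, if_true, if_false] at h
      linear_combination h
    have E136 : v j1 * c 5 + v j6 * c 5 = 0 := by
      have h := hphi ![j1, j3, j6]
      simp (config := { decide := true }) only [Fin.sum_univ_six, G0, G1, G2, G3, G4, G5, ee, ← map_sub, phi_triple, Matrix.cons_val_zero, Matrix.cons_val_one, Matrix.head_cons, Matrix.cons_val_two, Matrix.tail_cons, Finsupp.sub_apply, bb_apply, if_true, if_false] at h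
      linear_combination h
    have E145 : -(v j1 * c 4) + v j4 * c 5 + v j5 * c 3 = 0 := by
      have h := hphi ![j1, j4, j5]
      simp (config := { decide := true }) only [Fin.sum_univ_six, G0, G1, G2, G3, G4, G5, ee, ← map_sub, phi_triple, Matrix.cons_val_zero, Matrix.cons_val_one, Matrix.head_cons, Matrix.cons_val_two, Matrix.tail_cons, Finsupp.sub_apply, bb_apply, if_true, if_false] at h
      linear_combination h
    have E146 : v j1 * c 3 + v j6 * c 3 = 0 := by
      have h := hphi ![j1, j4, j6]
      simp (config := { decide := true }) only [Fin.sum_univ_six, G0, G1, G2, G3, G4, G5, ee, ← map_sub, phi_triple, Matrix.cons_val_zero, Matrix.cons_val_one, Matrix.head_cons, Matrix.cons_val_two, Matrix.tail_cons, Finsupp.sub_apply, bb_apply, if_true, if_false] at h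
      linear_combination h
    have E156 : v j1 * c 2 - v j1 * c 5 - v j6 * c 5 = 0 := by
      have h := hphi ![j1, j5, j6]
      simp (config := { decide := true }) only [Fin.sum_univ_six, G0, G1, G2, G3, G4, G5, ee, ← map_sub, phi_triple, Matrix.cons_val_zero, Matrix.cons_val_one, Matrix.head_cons, Matrix.cons_val_two, Matrix.tail_cons, Finsupp.sub_apply, bb_apply, if_true, if_false] at h
      linear_combination h
    have E234 : v j2 * c 1 - v j2 * c 4 - v j4 * c 4 = 0 := by
      have h := hphi ![j2, j3, j4]
      simp (config := { decide := true }) only [Fin.sum_univ_six, G0, G1, G2, G3, G4, G5, ee, ← map_sub, phi_triple, Matrix.cons_val_zero, Matrix.cons_val_one, Matrix.head_cons, Matrix.cons_val_two, Matrix.tail_cons, Finsupp.sub_apply, bb_apply, if_true, if_false] at h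
      linear_combination h
    have E235 : -(v j3 * c 4) - v j5 * c 4 = 0 := by
      have h := hphi ![j2, j3, j5]
      simp (config := { decide := true }) only [Fin.sum_univ_six, G0, G1, G2, G3, G4, G5, ee, ← map_sub, phi_triple, Matrix.cons_val_zero, Matrix.cons_val_one, Matrix.head_cons, Matrix.cons_val_two, Matrix.tail_cons, Finsupp.sub_apply, bb_apply, if_true, if_false] at h
      linear_combination h
    have E236 : v j2 * c 5 + v j3 * c 3 - v j6 * c 4 = 0 := by
      have h := hphi ![j2, j3, j6]
      simp (config := { decide := true }) only [Fin.sum_univ_six, G0, G1, G2, G3, G4, G5, ee, ← map_sub, phi_triple, Matrix.cons_val_zero, Matrix.cons_val_one, Matrix.head_cons, Matrix.cons_val_two, Matrix.tail_cons, Finsupp.sub_apply, bb_apply, if_true, if_false] at h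
      linear_combination h
    have E245 : -(v j2 * c 4) - v j4 * c 4 = 0 := by
      have h := hphi ![j2, j4, j5]
      simp (config := { decide := true }) only [Fin.sum_univ_six, G0, G1, G2, G3, G4, G5, ee, ← map_sub, phi_triple, Matrix.cons_val_zero, Matrix.cons_val_one, Matrix.head_cons, Matrix.cons_val_two, Matrix.tail_cons, Finsupp.sub_apply, bb_apply, if_true, if_false] at h
      linear_combination h
    have E246 : v j2 * c 3 + v j4 * c 3 = 0 := by
      have h := hphi ![j2, j4, j6]
      simp (config := { decide := true }) only [Fin.sum_univ_six, G0, G1, G2, G3, G4, G5, ee, ← map_sub, phi_triple, Matrix.cons_val_zero, Matrix.cons_val_one, Matrix.head_cons, Matrix.cons_val_two, Matrix.tail_cons, Finsupp.sub_apply, bb_apply, if_true, if_false] at h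
      linear_combination h
    have E256 : v j2 * c 2 - v j2 * c 5 + v j5 * c 3 + v j6 * c 4 = 0 := by
      have h := hphi ![j2, j5, j6]
      simp (config := { decide := true }) only [Fin.sum_univ_six, G0, G1, G2, G3, G4, G5, ee, ← map_sub, phi_triple, Matrix.cons_val_zero, Matrix.cons_val_one, Matrix.head_cons, Matrix.cons_val_two, Matrix.tail_cons, Finsupp.sub_apply, bb_apply, if_true, if_false] at h
      linear_combination h
    have E345 : -(v j3 * c 4) + v j5 * c 1 - v j5 * c 4 = 0 := by
      have h := hphi ![j3, j4, j5]
      simp (config := { decide := true }) only [Fin.sum_univ_six, G0, G1, G2, G3, G4, G5, ee, ← map_sub, phi_triple, Matrix.cons_val_zero, Matrix.cons_val_one, Matrix.head_cons, Matrix.cons_val_two, Matrix.tail_cons, Finsupp.sub_apply, bb_apply, if_true, if_false] at h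
      linear_combination h
    have E346 : v j3 * c 3 - v j4 * c 5 + v j6 * c 1 - v j6 * c 4 = 0 := by
      have h := hphi ![j3, j4, j6]
      simp (config := { decide := true }) only [Fin.sum_univ_six, G0, G1, G2, G3, G4, G5, ee, ← map_sub, phi_triple, Matrix.cons_val_zero, Matrix.cons_val_one, Matrix.head_cons, Matrix.cons_val_two, Matrix.tail_cons, Finsupp.sub_apply, bb_apply, if_true, if_false] at h
      linear_combination h
    have E356 : v j3 * c 2 - v j3 * c 5 - v j5 * c 5 = 0 := by
      have h := hphi ![j3, j5, j6]
      simp (config := { decide := true }) only [Fin.sum_univ_six, G0, G1, G2, G3, G4, G5, ee, ← map_sub, phi_triple, Matrix.cons_val_zero, Matrix.cons_val_one, Matrix.head_cons, Matrix.cons_val_two, Matrix.tail_cons, Finsupp.sub_apply, bb_apply, if_true, if_false] at h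
      linear_combination h
    have E456 : v j4 * c 2 - v j4 * c 5 - v j5 * c 3 - v j6 * c 4 = 0 := by
      have h := hphi ![j4, j5, j6]
      simp (config := { decide := true }) only [Fin.sum_univ_six, G0, G1, G2, G3, G4, G5, ee, ← map_sub, phi_triple, Matrix.cons_val_zero, Matrix.cons_val_one, Matrix.head_cons, Matrix.cons_val_two, Matrix.tail_cons, Finsupp.sub_apply, bb_apply, if_true, if_false] at h
      linear_combination h
    obtain ⟨q1, q2, q3, q4, q5, q6⟩ := key k (v j1) (v j2) (v j3) (v j4) (v j5) (v j6)
      (c 0) (c 1) (c 2) (c 3) (c 4) (c 5) P1 P2 P3 P4 E123 E124 E125 E126 E134 E135 E136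
      E145 E146 E156 E234 E235 E236 E245 E246 E256 E345 E346 E356 E456
    have hx' : (x : Egen k 3) = 0 := by
      rw [← hc, Fin.sum_univ_six, q1, q2, q3, q4, q5, q6]
      simp
    exact Subtype.ext hx'
  refine ⟨hinj, ?_⟩
  rintro ⟨-, xbar, hx1, hax, hnot⟩
  obtain ⟨xe, hxe1, rfl⟩ := hx1
  obtain ⟨w, hw⟩ : ∃ w : RIdx 3 →₀ k, xe = ι k w := by
    have h1 : xe ∈ LinearMap.range (ι k (M := RIdx 3 →₀ k)) ^ 1 := hxe1
    rw [pow_one] at h1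
    obtain ⟨w, hw⟩ := h1
    exact ⟨w, hw.symm⟩
  have haxI : a * xe ∈ resIdeal k 3 := by
    have hpi0 : resπ k 3 (a * xe) = resπ k 3 0 := by rw [map_zero, map_mul]; exact hax
    exact (RingCon.eq _).mp hpi0
  have hmem2 : a * xe ∈ resI2 k 3 := ⟨haxI, mul_mem2 k ha1 hxe1⟩
  have hpsi0 : resPsi k 3 a (⟨a * xe, hmem2⟩ : resI2 k 3) = 0 := by
    show a * (a * xe) = 0
    rw [hv, ← mul_assoc, ι_sq_zero, zero_mul]
  have h0 : (⟨a * xe, hmem2⟩ : resI2 k 3) = 0 := by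
    apply hinj
    rw [hpsi0, map_zero]
  have haxe : ι k v * ι k w = 0 := by
    have h1 := congrArg Subtype.val h0
    rw [← hv, ← hw]
    exact h1
  have hvne : v ≠ 0 := by
    rintro rfl
    exact ha (Or.inl (Or.inl (Or.inl (by rw [hv, map_zero]; exact Submodule.zero_mem _))))
  obtain ⟨lam, hlam⟩ := dep k v w hvne haxe
  apply hnot
  refine ⟨resπ k 3 (algebraMap k (Egen k 3) lam),
    ⟨algebraMap k (Egen k 3) lam, ?_, rfl⟩, ?_⟩
  · show algebraMap k (Egen k 3) lam ∈ LinearMap.range (ι k (M := RIdx 3 →₀ k)) ^ 0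
    rw [pow_zero]
    exact Submodule.mem_one.mpr ⟨lam, rfl⟩
  · show resπ k 3 a * resπ k 3 (algebraMap k (Egen k 3) lam) = resπ k 3 xe
    rw [← map_mul]
    congr 1
    rw [hw, hlam, map_smul, ← hv, ← Algebra.commutes, ← Algebra.smul_def]
end
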